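/- arXiv:2307.02062 — 5 statements merged into one kernel-verified Lean document; each statement's English description precedes it below -/
import Mathlib

section
/- Suppose that det(Z_jᵀR_j) ≠ 0 for j = k−m_k+1, …, k, where X_j = (Δx_{j−m_j}, …, Δx_{j−1}), R_j = (Δr_{j−m_j}, …, Δr_{j−1}) are the original historical sequences (with m_j = m_k − (k−j)), Δ denotes forward difference, and Z_j := X_j for the Type-I method, Z_j := R_j for the Type-II method. Then the modified-sequence procedures defining ζ_k, q_k, Γ_k, r̄_k are well defined, and: (1) X_k = P_kS_k and R_k = Q_kS_k for some unit upper triangular matrix S_k ∈ ℝ^{m_k×m_k}; (2) V_kᵀQ_k is lower triangular; (3) r̄_k ⊥ range(V_k); moreover, the AM update with modified historical sequences produces the same iterates x_{k−m_k+1}, …, x_{k+1} as the original AM update x_{j+1} = x_j + G_j r_j with G_j = β_j I − (X_j + β_j R_j)(Z_jᵀR_j)⁻¹Z_jᵀ. -/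
open scoped InnerProductSpace
open Finset Matrix

noncomputable section

/-- Euclidean space `ℝ^d`. -/
abbrev E (d : ℕ) := EuclideanSpace ℝ (Fin d)

/-- Matrix–vector multiplication on Euclidean space. -/
def mvE {d m : ℕ} (A : Matrix (Fin d) (Fin m) ℝ) (u : E m) : E d :=
  Matrix.toEuclideanLin A u

noncomputable def fs (M : ℕ → ℕ → ℝ) (c : ℕ → ℝ) : ℕ → ℝ
  | n => (c n - ∑ j ∈ (Finset.range n).attach, fs M c j * M n j) / M n n
  termination_by n => n
  decreasing_by exact Finset.mem_range.mp j.2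

lemma fs_eq (M : ℕ → ℕ → ℝ) (c : ℕ → ℝ) (n : ℕ) :
    fs M c n = (c n - ∑ j ∈ Finset.range n, fs M c j * M n j) / M n n := by
  rw [fs]
  rw [Finset.sum_attach (Finset.range n) (fun j => fs M c j * M n j)]

/-- forward substitution solves the lower-triangular system. -/
lemma fs_solve (M : ℕ → ℕ → ℝ) (c : ℕ → ℝ) (n : ℕ)
    (hlow : ∀ i j, i < j → j ≤ n → M i j = 0)
    (hdiag : ∀ i ≤ n, M i i ≠ 0) :
    ∀ i ≤ n, c i - ∑ j ∈ Finset.range (n + 1), fs M c j * M i j = 0 := by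
  intro i hi
  have hsub : ∑ j ∈ Finset.range (n + 1), fs M c j * M i j
      = ∑ j ∈ Finset.range (i + 1), fs M c j * M i j := by
    refine (Finset.sum_subset (Finset.range_subset_range.mpr (by omega)) ?_).symm
    intro j hj hj'
    have h1 : j < n + 1 := Finset.mem_range.mp hj
    have h2 : ¬ j < i + 1 := fun h => hj' (Finset.mem_range.mpr h)
    rw [hlow i j (by omega) (by omega), mul_zero]
  rw [hsub, Finset.sum_range_succ, fs_eq M c i,
    div_mul_cancel₀ _ (hdiag i hi)]
  ring

noncomputable def gs {d : ℕ} (ty : Bool) (dx dr : ℕ → E d) : ℕ → (E d × E d) × (ℕ → ℝ)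
  | a =>
    let prev : ℕ → E d × E d := fun i =>
      if h : i < a then (gs ty dx dr i).1 else 0
    let v : ℕ → E d := fun i => if ty then (prev i).2 else (prev i).1
    let ζ : ℕ → ℝ := fs (fun i j => ⟪v i, (prev j).2⟫_ℝ) (fun i => ⟪v i, dr a⟫_ℝ)
    ((dx a - ∑ i ∈ Finset.range a, ζ i • (prev i).1,
      dr a - ∑ i ∈ Finset.range a, ζ i • (prev i).2), ζ)
  termination_by a => a
  decreasing_by exact h

end
noncomputable section
variable {d : ℕ} (ty : Bool) (dx dr : ℕ → E d)

def Pf (a : ℕ) : E d := ((gs ty dx dr a).1).1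
def Qf (a : ℕ) : E d := ((gs ty dx dr a).1).2
def Zf (a : ℕ) : ℕ → ℝ := (gs ty dx dr a).2
def Vf (i : ℕ) : E d := if ty then Qf ty dx dr i else Pf ty dx dr i

lemma norm_lemmas (a : ℕ) :
    (∀ i, (if h : i < a then (gs ty dx dr i).1 else 0)
        = if i < a then (Pf ty dx dr i, Qf ty dx dr i) else 0) := by
  intro i; by_cases h : i < a <;> simp [h, Pf, Qf]

lemma hv2 (a : ℕ) : ∀ i, (if ty = true then (if i < a then Qf ty dx dr i else 0)
      else (if i < a then Pf ty dx dr i else 0)) = if i < a then Vf ty dx dr i else (0 : E d) := by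
  intro i; cases ty <;> by_cases h : i < a <;> simp [Vf, h]

lemma Zf_eq (a : ℕ) :
    Zf ty dx dr a = fs (fun i j => ⟪(if i < a then Vf ty dx dr i else 0),
        (if j < a then Qf ty dx dr j else 0)⟫_ℝ)
      (fun i => ⟪(if i < a then Vf ty dx dr i else 0), dr a⟫_ℝ) := by
  rw [Zf]; conv_lhs => rw [gs]
  dsimp only
  simp only [norm_lemmas, apply_ite Prod.snd, apply_ite Prod.fst, Prod.snd_zero, Prod.fst_zero,
    hv2]

lemma Pf_eq (a : ℕ) : Pf ty dx dr a
    = dx a - ∑ i ∈ Finset.range a, Zf ty dx dr a i • Pf ty dx dr i := by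
  rw [Pf]; conv_lhs => rw [gs]
  dsimp only
  simp only [norm_lemmas, apply_ite Prod.snd, apply_ite Prod.fst, Prod.snd_zero, Prod.fst_zero,
    hv2]
  rw [← Zf_eq]
  refine congrArg _ (Finset.sum_congr rfl fun i hi => ?_)
  rw [if_pos (Finset.mem_range.mp hi)]

lemma Qf_eq (a : ℕ) : Qf ty dx dr a
    = dr a - ∑ i ∈ Finset.range a, Zf ty dx dr a i • Qf ty dx dr i := by
  rw [Qf]; conv_lhs => rw [gs]
  dsimp only
  simp only [norm_lemmas, apply_ite Prod.snd, apply_ite Prod.fst, Prod.snd_zero, Prod.fst_zero,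
    hv2]
  rw [← Zf_eq]
  refine congrArg _ (Finset.sum_congr rfl fun i hi => ?_)
  rw [if_pos (Finset.mem_range.mp hi)]


def Sfun (l i : ℕ) : ℝ :=
  if l = i then 1 else if l < i then Zf ty dx dr i l else 0

lemma col_expand (v : ℕ → E d) (w : ℕ → E d)
    (hw : ∀ i, w i = v i - ∑ l ∈ Finset.range i, Zf ty dx dr i l • w l)
    {n i : ℕ} (hi : i < n) :
    v i = ∑ l ∈ Finset.range n, Sfun ty dx dr l i • w l := by
  have hsub : ∑ l ∈ Finset.range n, Sfun ty dx dr l i • w l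
      = ∑ l ∈ Finset.range (i + 1), Sfun ty dx dr l i • w l := by
    refine (Finset.sum_subset (Finset.range_subset_range.mpr (by omega)) ?_).symm
    intro l hl hl'
    have h2 : ¬ l < i + 1 := fun h => hl' (Finset.mem_range.mpr h)
    have : Sfun ty dx dr l i = 0 := by
      rw [Sfun, if_neg (by omega), if_neg (by omega)]
    rw [this, zero_smul]
  rw [hsub, Finset.sum_range_succ]
  have h1 : Sfun ty dx dr i i = 1 := by rw [Sfun, if_pos rfl]
  rw [h1, one_smul]
  have : ∀ l ∈ Finset.range i, Sfun ty dx dr l i • w l = Zf ty dx dr i l • w l := by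
    intro l hl
    have := Finset.mem_range.mp hl
    rw [Sfun, if_neg (by omega), if_pos this]
  rw [Finset.sum_congr rfl this, hw i]
  abel

lemma colX {n i : ℕ} (hi : i < n) :
    dx i = ∑ l ∈ Finset.range n, Sfun ty dx dr l i • Pf ty dx dr l :=
  col_expand ty dx dr dx (Pf ty dx dr) (Pf_eq ty dx dr) hi

lemma colR {n i : ℕ} (hi : i < n) :
    dr i = ∑ l ∈ Finset.range n, Sfun ty dx dr l i • Qf ty dx dr l :=
  col_expand ty dx dr dr (Qf ty dx dr) (Qf_eq ty dx dr) hi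

lemma colZ {n i : ℕ} (hi : i < n) :
    (if ty then dr else dx) i = ∑ l ∈ Finset.range n, Sfun ty dx dr l i • Vf ty dx dr l := by
  cases ty
  · simpa [Vf] using colX false dx dr hi
  · simpa [Vf] using colR true dx dr hi

lemma gram_factor {n i j : ℕ} (hi : i < n) (hj : j < n) :
    ⟪(if ty then dr else dx) i, dr j⟫_ℝ
      = ∑ l ∈ Finset.range n, ∑ m ∈ Finset.range n,
          Sfun ty dx dr l i * (⟪Vf ty dx dr l, Qf ty dx dr m⟫_ℝ * Sfun ty dx dr m j) := by
  rw [colZ ty dx dr hi, colR ty dx dr hj, sum_inner]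
  refine Finset.sum_congr rfl fun l hl => ?_
  rw [real_inner_smul_left, inner_sum, Finset.mul_sum]
  refine Finset.sum_congr rfl fun m hm => ?_
  rw [real_inner_smul_right]
  ring


lemma fin_double (n : ℕ) (f : ℕ → ℕ → ℝ) :
    ∑ l : Fin n, ∑ m : Fin n, f ↑l ↑m = ∑ l ∈ Finset.range n, ∑ m ∈ Finset.range n, f l m := by
  rw [Fin.sum_univ_eq_sum_range (fun l => ∑ m : Fin n, f l ↑m) n]
  exact Finset.sum_congr rfl fun l _ => Fin.sum_univ_eq_sum_range (f l) n

lemma Mz_factor (n : ℕ) :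
    (Matrix.of fun i j : Fin n => ⟪(if ty then dr else dx) (i : ℕ), dr (j : ℕ)⟫_ℝ)
      = (Matrix.of fun l i : Fin n => Sfun ty dx dr l i)ᵀ
        * (Matrix.of fun l m : Fin n => ⟪Vf ty dx dr l, Qf ty dx dr m⟫_ℝ)
        * (Matrix.of fun l i : Fin n => Sfun ty dx dr l i) := by
  ext i j
  simp only [Matrix.mul_apply, Matrix.of_apply, Matrix.transpose_apply]
  rw [gram_factor ty dx dr i.2 j.2, ← fin_double]
  rw [Finset.sum_comm]
  refine Finset.sum_congr rfl fun m _ => ?_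
  rw [Finset.sum_mul]
  exact Finset.sum_congr rfl fun l _ => by ring

lemma det_S (n : ℕ) : (Matrix.of fun l i : Fin n => Sfun ty dx dr l i).det = 1 := by
  rw [Matrix.det_of_upperTriangular]
  · refine Finset.prod_eq_one fun i _ => ?_
    simp [Sfun]
  · intro i j hij
    have h2 : (j : ℕ) < (i : ℕ) := hij
    simp only [Matrix.of_apply, Sfun]
    rw [if_neg (by omega), if_neg (by omega)]

lemma key (mk : ℕ)
    (hdet2 : ∀ a < mk, (Matrix.of fun i j : Fin (a + 1) =>
      ⟪(if ty then dr else dx) (i : ℕ), dr (j : ℕ)⟫_ℝ).det ≠ 0) :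
    ∀ a, a < mk →
      (∀ i j : ℕ, i < j → j ≤ a → ⟪Vf ty dx dr i, Qf ty dx dr j⟫_ℝ = 0) ∧
      (∀ j ≤ a, ⟪Vf ty dx dr j, Qf ty dx dr j⟫_ℝ ≠ 0) := by
  intro a
  induction a using Nat.strong_induction_on with
  | _ a IH =>
    intro ha
    have hA : ∀ i j : ℕ, i < j → j ≤ a → ⟪Vf ty dx dr i, Qf ty dx dr j⟫_ℝ = 0 := by
      intro i j hij hja
      rcases lt_or_eq_of_le hja with hj | hj
      · exact ((IH j (by omega) (by omega)).1) i j hij le_rfl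
      · subst hj
        have ha1 : 1 ≤ j := by omega
        -- expand Q j
        rw [Qf_eq, inner_sub_right, inner_sum]
        simp only [real_inner_smul_right]
        -- use fs_solve on the truncated system
        have hsolve := fs_solve
          (fun i' j' => ⟪(if i' < j then Vf ty dx dr i' else 0),
              (if j' < j then Qf ty dx dr j' else 0)⟫_ℝ)
          (fun i' => ⟪(if i' < j then Vf ty dx dr i' else 0), dr j⟫_ℝ) (j - 1)
          (by
            intro i' j' hij' hj'
            rw [if_pos (by omega), if_pos (by omega)]
            exact ((IH (j - 1) (by omega) (by omega)).1) i' j' hij' hj')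
          (by
            intro i' hi'
            rw [if_pos (by omega), if_pos (by omega)]
            exact ((IH (j - 1) (by omega) (by omega)).2) i' hi')
          i (by omega)
        rw [show j - 1 + 1 = j by omega] at hsolve
        rw [← Zf_eq] at hsolve
        rw [if_pos hij] at hsolve
        refine Eq.trans ?_ hsolve
        congr 1
        refine Finset.sum_congr rfl fun l hl => ?_
        rw [if_pos (Finset.mem_range.mp hl)]
    refine ⟨hA, ?_⟩
    have hdet := hdet2 a ha
    rw [Mz_factor ty dx dr (a + 1)] at hdet
    have hL : (Matrix.of fun l m : Fin (a + 1) =>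
        ⟪Vf ty dx dr l, Qf ty dx dr m⟫_ℝ).det
        = ∏ m : Fin (a + 1), ⟪Vf ty dx dr m, Qf ty dx dr m⟫_ℝ := by
      rw [Matrix.det_of_lowerTriangular]
      · rfl
      · intro i j hij
        have : (i : ℕ) < j := hij
        exact hA i j this (by omega)
    rw [Matrix.det_mul, Matrix.det_mul, Matrix.det_transpose, det_S, hL, one_mul,
      mul_one] at hdet
    intro j hj
    have := Finset.prod_ne_zero_iff.mp hdet ⟨j, by omega⟩ (Finset.mem_univ _)
    simpa using this


lemma matFactor (v w : ℕ → E d)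
    (hw : ∀ i, w i = v i - ∑ l ∈ Finset.range i, Zf ty dx dr i l • w l) (n : ℕ) :
    (Matrix.of fun (c : Fin d) (i : Fin n) => v (i : ℕ) c)
      = (Matrix.of fun (c : Fin d) (i : Fin n) => w (i : ℕ) c)
        * (Matrix.of fun (l i : Fin n) => Sfun ty dx dr (l : ℕ) (i : ℕ)) := by
  ext c i
  simp only [Matrix.mul_apply, Matrix.of_apply]
  rw [col_expand ty dx dr v w hw i.2]
  have h1 : (∑ l ∈ Finset.range n, Sfun ty dx dr l ↑i • w l) c
      = ∑ l ∈ Finset.range n, w l c * Sfun ty dx dr l ↑i := by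
    rw [WithLp.ofLp_sum, Finset.sum_apply]
    exact Finset.sum_congr rfl fun l _ => mul_comm _ _
  rw [h1, ← Fin.sum_univ_eq_sum_range (fun l => w l c * Sfun ty dx dr l ↑i) n]

def Gamf (u : E d) : ℕ → ℝ :=
  fs (fun i j => ⟪Vf ty dx dr i, Qf ty dx dr j⟫_ℝ) (fun i => ⟪Vf ty dx dr i, u⟫_ℝ)

lemma Gamf_solve (u : E d) (a : ℕ)
    (hlow : ∀ i j : ℕ, i < j → j ≤ a → ⟪Vf ty dx dr i, Qf ty dx dr j⟫_ℝ = 0)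
    (hdiag : ∀ i ≤ a, ⟪Vf ty dx dr i, Qf ty dx dr i⟫_ℝ ≠ 0) :
    ∀ i ≤ a, ⟪Vf ty dx dr i, u⟫_ℝ
      - ∑ l ∈ Finset.range (a + 1), Gamf ty dx dr u l * ⟪Vf ty dx dr i, Qf ty dx dr l⟫_ℝ = 0 := by
  intro i hi
  have := fs_solve (fun i j => ⟪Vf ty dx dr i, Qf ty dx dr j⟫_ℝ)
    (fun i => ⟪Vf ty dx dr i, u⟫_ℝ) a hlow hdiag i hi
  exact this

lemma Gamf_ortho (u : E d) (a : ℕ)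
    (hlow : ∀ i j : ℕ, i < j → j ≤ a → ⟪Vf ty dx dr i, Qf ty dx dr j⟫_ℝ = 0)
    (hdiag : ∀ i ≤ a, ⟪Vf ty dx dr i, Qf ty dx dr i⟫_ℝ ≠ 0) :
    ∀ i ≤ a, ⟪Vf ty dx dr i,
      u - ∑ l ∈ Finset.range (a + 1), Gamf ty dx dr u l • Qf ty dx dr l⟫_ℝ = 0 := by
  intro i hi
  rw [inner_sub_right, inner_sum]
  simp only [real_inner_smul_right]
  exact Gamf_solve ty dx dr u a hlow hdiag i hi



/-- Proposition 2.1 of the paper.  Consider a window of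
iterations `j = k0+1, …, k0+mk` of the AM method (`k0 = k - m_k` is the restart
point, so the memory sizes are `m_j = j - k0`), generated by the *original* AM
update `x_{j+1} = x_j + G_j r_j` with
`G_j = β_j I - (X_j + β_j R_j)(Z_jᵀ R_j)⁻¹ Z_jᵀ`.  If `det(Z_jᵀ R_j) ≠ 0`
throughout the window, then the modified-sequence procedures are well defined
(`v_jᵀ q_j ≠ 0`): there exist `p, q, ζ, Γ` satisfying the recursions
(2.6)–(2.7) such that (1) `X_k = P_k S_k` and `R_k = Q_k S_k` with `S_k` unit
upper triangular, (2) `V_kᵀ Q_k` is lower triangular, (3) `r̄_j ⊥ range(V_j)`,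
and the AM update with modified sequences reproduces the iterates
`x_{k-m_k+1}, …, x_{k+1}`. -/
theorem stmt_0 {d : ℕ} (g : E d → E d) (x : ℕ → E d) (r : ℕ → E d)
    (hr : ∀ j, r j = g (x j) - x j)
    (β : ℕ → ℝ) (hβ : ∀ j, 0 < β j)
    (typeII : Bool) (k0 mk : ℕ) (hmk : 1 ≤ mk)
    (X R Z : (a : ℕ) → Matrix (Fin d) (Fin (a + 1)) ℝ)
    (hX : ∀ a, X a = Matrix.of fun c (i : Fin (a + 1)) =>
      (x (k0 + (i : ℕ) + 1) - x (k0 + (i : ℕ))) c)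
    (hR : ∀ a, R a = Matrix.of fun c (i : Fin (a + 1)) =>
      (r (k0 + (i : ℕ) + 1) - r (k0 + (i : ℕ))) c)
    (hZ : ∀ a, Z a = if typeII then R a else X a)
    (hdet : ∀ a < mk, ((Z a)ᵀ * R a).det ≠ 0)
    (hAM : ∀ a < mk, x (k0 + a + 2) = x (k0 + a + 1) +
      mvE (β (k0 + 1 + a) • (1 : Matrix (Fin d) (Fin d) ℝ)
            - (X a + β (k0 + 1 + a) • R a) * ((Z a)ᵀ * R a)⁻¹ * (Z a)ᵀ)
          (r (k0 + a + 1))) :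
    ∃ (p q : ℕ → E d) (ζ Γ : ℕ → ℕ → ℝ),
      -- well-definedness of the procedures (2.6) and (2.7)
      (∀ a < mk, ⟪(if typeII then q (k0 + 1 + a) else p (k0 + 1 + a)), q (k0 + 1 + a)⟫_ℝ ≠ 0) ∧
      -- the modified vector pairs
      (p (k0 + 1) = x (k0 + 1) - x k0 ∧ q (k0 + 1) = r (k0 + 1) - r k0) ∧
      (∀ a, 1 ≤ a → a < mk →
        p (k0 + 1 + a) = (x (k0 + 1 + a) - x (k0 + a))
            - ∑ i ∈ Finset.range a, ζ (k0 + 1 + a) i • p (k0 + 1 + i) ∧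
        q (k0 + 1 + a) = (r (k0 + 1 + a) - r (k0 + a))
            - ∑ i ∈ Finset.range a, ζ (k0 + 1 + a) i • q (k0 + 1 + i) ∧
        ∀ i < a, ⟪(if typeII then q (k0 + 1 + i) else p (k0 + 1 + i)), q (k0 + 1 + a)⟫_ℝ = 0) ∧
      -- property 1 : `X_k = P_k S_k` and `R_k = Q_k S_k`, `S_k` unit upper triangular
      (∃ Sm : Matrix (Fin mk) (Fin mk) ℝ,
        (∀ i, Sm i i = 1) ∧ (∀ i j : Fin mk, (j : ℕ) < (i : ℕ) → Sm i j = 0) ∧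
        (Matrix.of fun c (i : Fin mk) => (x (k0 + (i : ℕ) + 1) - x (k0 + (i : ℕ))) c)
          = (Matrix.of fun c (i : Fin mk) => p (k0 + 1 + (i : ℕ)) c) * Sm ∧
        (Matrix.of fun c (i : Fin mk) => (r (k0 + (i : ℕ) + 1) - r (k0 + (i : ℕ))) c)
          = (Matrix.of fun c (i : Fin mk) => q (k0 + 1 + (i : ℕ)) c) * Sm) ∧
      -- property 2 : `V_kᵀ Q_k` is lower triangular
      (∀ i j : ℕ, i < j → j < mk →
        ⟪(if typeII then q (k0 + 1 + i) else p (k0 + 1 + i)), q (k0 + 1 + j)⟫_ℝ = 0) ∧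
      -- property 3 and coincidence with the original AM iterates
      (∀ a < mk,
        (∀ i ≤ a, ⟪(if typeII then q (k0 + 1 + i) else p (k0 + 1 + i)),
            r (k0 + 1 + a) - ∑ l ∈ Finset.range (a + 1), Γ (k0 + 1 + a) l • q (k0 + 1 + l)⟫_ℝ
            = 0) ∧
        x (k0 + a + 2) =
          (x (k0 + 1 + a) - ∑ l ∈ Finset.range (a + 1), Γ (k0 + 1 + a) l • p (k0 + 1 + l))
          + β (k0 + 1 + a) •
              (r (k0 + 1 + a) - ∑ l ∈ Finset.range (a + 1), Γ (k0 + 1 + a) l • q (k0 + 1 + l))) := by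
  classical
  set dxx : ℕ → E d := fun a => x (k0 + a + 1) - x (k0 + a) with hdxx
  set drr : ℕ → E d := fun a => r (k0 + a + 1) - r (k0 + a) with hdrr
  have hinner : ∀ u v : E d, ⟪u, v⟫_ℝ = ∑ c, u c * v c := by
    intro u v
    simp [PiLp.inner_apply, RCLike.inner_apply, conj_trivial]
    exact Finset.sum_congr rfl fun _ _ => mul_comm _ _
  -- Gram bridge
  have hZR : ∀ a : ℕ, (Z a)ᵀ * R a
      = Matrix.of fun i j : Fin (a + 1) =>
          ⟪(if typeII then drr else dxx) (i : ℕ), drr (j : ℕ)⟫_ℝ := by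
    intro a
    ext i j
    simp only [Matrix.mul_apply, Matrix.of_apply, Matrix.transpose_apply, hZ, hR, hX]
    cases typeII <;>
      simp only [if_true, if_false, Bool.false_eq_true, Matrix.of_apply, hinner, hdxx, hdrr] <;>
      rfl
  have hdet2 : ∀ a < mk, (Matrix.of fun i j : Fin (a + 1) =>
      ⟪(if typeII then drr else dxx) (i : ℕ), drr (j : ℕ)⟫_ℝ).det ≠ 0 := by
    intro a ha
    rw [← hZR a]; exact hdet a ha
  have hkey := key typeII dxx drr mk hdet2
  have hidx : ∀ n : ℕ, k0 + 1 + n - (k0 + 1) = n := fun n => by omega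
  have hVf : ∀ i : ℕ, Vf typeII dxx drr i
      = if typeII then Qf typeII dxx drr i else Pf typeII dxx drr i := fun i => rfl
  refine ⟨fun n => Pf typeII dxx drr (n - (k0 + 1)), fun n => Qf typeII dxx drr (n - (k0 + 1)),
    fun n => Zf typeII dxx drr (n - (k0 + 1)), fun n => Gamf typeII dxx drr (r n),
    ?_, ?_, ?_, ?_, ?_, ?_⟩
  · -- well-definedness
    intro a ha
    simp only [hidx]
    rw [← hVf]
    exact (hkey a ha).2 a le_rfl
  · -- first pair
    constructor
    · show Pf typeII dxx drr (k0 + 1 - (k0 + 1)) = _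
      rw [Nat.sub_self, Pf_eq]
      simp [hdxx]
    · show Qf typeII dxx drr (k0 + 1 - (k0 + 1)) = _
      rw [Nat.sub_self, Qf_eq]
      simp [hdrr]
  · -- recursions
    intro a ha1 ha
    simp only [hidx]
    refine ⟨?_, ?_, ?_⟩
    · rw [Pf_eq]
      congr 1
      simp only [hdxx]
      rw [show k0 + a + 1 = k0 + 1 + a by omega]
    · rw [Qf_eq]
      congr 1
      simp only [hdrr]
      rw [show k0 + a + 1 = k0 + 1 + a by omega]
    · intro i hi
      rw [← hVf]
      exact (hkey a ha).1 i a hi le_rfl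
  · -- property 1
    refine ⟨Matrix.of fun l i : Fin mk => Sfun typeII dxx drr (l : ℕ) (i : ℕ), ?_, ?_, ?_, ?_⟩
    · intro i; simp [Sfun]
    · intro i j hji
      simp only [Matrix.of_apply, Sfun]
      rw [if_neg (by omega), if_neg (by omega)]
    · simp only [hidx]
      exact matFactor typeII dxx drr dxx (Pf typeII dxx drr) (Pf_eq typeII dxx drr) mk
    · simp only [hidx]
      exact matFactor typeII dxx drr drr (Qf typeII dxx drr) (Qf_eq typeII dxx drr) mk
  · -- property 2
    intro i j hij hj
    simp only [hidx]
    rw [← hVf]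
    exact (hkey j hj).1 i j hij le_rfl
  · -- property 3 and coincidence
    intro a ha
    constructor
    · intro i hi
      simp only [hidx]
      rw [← hVf]
      exact Gamf_ortho typeII dxx drr (r (k0 + 1 + a)) a (hkey a ha).1 (hkey a ha).2 i hi
    · -- coincidence
      simp only [hidx]
      have e : k0 + 1 + a = k0 + a + 1 := by omega
      rw [e]
      have hMzU : IsUnit ((Z a)ᵀ * R a).det := isUnit_iff_ne_zero.mpr (hdet a ha)
      have hXf : X a
          = (Matrix.of fun (c : Fin d) (l : Fin (a + 1)) => Pf typeII dxx drr (l : ℕ) c)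
            * (Matrix.of fun (l i : Fin (a + 1)) => Sfun typeII dxx drr (l : ℕ) (i : ℕ)) := by
        rw [hX]
        exact matFactor typeII dxx drr dxx (Pf typeII dxx drr) (Pf_eq typeII dxx drr) (a + 1)
      have hRf : R a
          = (Matrix.of fun (c : Fin d) (l : Fin (a + 1)) => Qf typeII dxx drr (l : ℕ) c)
            * (Matrix.of fun (l i : Fin (a + 1)) => Sfun typeII dxx drr (l : ℕ) (i : ℕ)) := by
        rw [hR]
        exact matFactor typeII dxx drr drr (Qf typeII dxx drr) (Qf_eq typeII dxx drr) (a + 1)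
      have hZf : Z a
          = (Matrix.of fun (c : Fin d) (l : Fin (a + 1)) => Vf typeII dxx drr (l : ℕ) c)
            * (Matrix.of fun (l i : Fin (a + 1)) => Sfun typeII dxx drr (l : ℕ) (i : ℕ)) := by
        rw [hZ]
        cases typeII
        · simp only [Bool.false_eq_true, if_false]
          rw [hXf]
          congr 1
        · simp only [if_true]
          rw [hRf]
          congr 1
      have hLf : (Matrix.of fun (c : Fin d) (l : Fin (a + 1)) => Vf typeII dxx drr (l : ℕ) c)ᵀ
            * (Matrix.of fun (c : Fin d) (l : Fin (a + 1)) => Qf typeII dxx drr (l : ℕ) c)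
          = Matrix.of fun (l m : Fin (a + 1)) =>
              ⟪Vf typeII dxx drr (l : ℕ), Qf typeII dxx drr (m : ℕ)⟫_ℝ := by
        ext l m
        simp only [Matrix.mul_apply, Matrix.transpose_apply, Matrix.of_apply]
        rw [hinner]
      have hMzf : (Z a)ᵀ * R a
          = (Matrix.of fun (l i : Fin (a + 1)) => Sfun typeII dxx drr (l : ℕ) (i : ℕ))ᵀ
            * ((Matrix.of fun (l m : Fin (a + 1)) =>
                ⟪Vf typeII dxx drr (l : ℕ), Qf typeII dxx drr (m : ℕ)⟫_ℝ)
            * (Matrix.of fun (l i : Fin (a + 1)) => Sfun typeII dxx drr (l : ℕ) (i : ℕ))) := by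
        rw [hZf, hRf, Matrix.transpose_mul, ← hLf]
        simp only [Matrix.mul_assoc]
      have hdetS := det_S typeII dxx drr (a + 1)
      have hdetL : IsUnit (Matrix.of fun (l m : Fin (a + 1)) =>
          ⟪Vf typeII dxx drr (l : ℕ), Qf typeII dxx drr (m : ℕ)⟫_ℝ).det := by
        have hh := hdet a ha
        rw [hMzf, Matrix.det_mul, Matrix.det_mul, Matrix.det_transpose, hdetS, one_mul,
          mul_one] at hh
        exact isUnit_iff_ne_zero.mpr hh
      have hSTU : IsUnit ((Matrix.of fun (l i : Fin (a + 1)) =>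
          Sfun typeII dxx drr (l : ℕ) (i : ℕ))ᵀ).det := by
        rw [Matrix.det_transpose, hdetS]; exact isUnit_one
      set Pm := Matrix.of fun (c : Fin d) (l : Fin (a + 1)) => Pf typeII dxx drr (l : ℕ) c with hPmd
      set Qm := Matrix.of fun (c : Fin d) (l : Fin (a + 1)) => Qf typeII dxx drr (l : ℕ) c with hQmd
      set Vm := Matrix.of fun (c : Fin d) (l : Fin (a + 1)) => Vf typeII dxx drr (l : ℕ) c with hVmd
      set Sm := Matrix.of fun (l i : Fin (a + 1)) => Sfun typeII dxx drr (l : ℕ) (i : ℕ) with hSmd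
      set L := Matrix.of fun (l m : Fin (a + 1)) =>
        ⟪Vf typeII dxx drr (l : ℕ), Qf typeII dxx drr (m : ℕ)⟫_ℝ with hLd
      set rv : Fin d → ℝ := fun c => r (k0 + a + 1) c with hrvd
      set w : Fin (a + 1) → ℝ := ((Z a)ᵀ * R a)⁻¹ *ᵥ ((Z a)ᵀ *ᵥ rv) with hwd
      set Γv : Fin (a + 1) → ℝ :=
        fun l => Gamf typeII dxx drr (r (k0 + a + 1)) (l : ℕ) with hΓvd
      have hVr : Vmᵀ *ᵥ rv
          = fun i : Fin (a + 1) => ⟪Vf typeII dxx drr (i : ℕ), r (k0 + a + 1)⟫_ℝ := by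
        funext i
        simp only [Matrix.mulVec, dotProduct, Matrix.transpose_apply, hVmd, Matrix.of_apply]
        rw [hinner]
      have hLG : L *ᵥ Γv
          = fun i : Fin (a + 1) => ⟪Vf typeII dxx drr (i : ℕ), r (k0 + a + 1)⟫_ℝ := by
        funext i
        simp only [Matrix.mulVec, dotProduct, hLd, Matrix.of_apply, hΓvd]
        have hs := Gamf_solve typeII dxx drr (r (k0 + a + 1)) a (hkey a ha).1 (hkey a ha).2
          i (by omega : (i : ℕ) ≤ a)
        have hconv : ∑ m : Fin (a + 1), ⟪Vf typeII dxx drr (i : ℕ), Qf typeII dxx drr (m : ℕ)⟫_ℝ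
              * Gamf typeII dxx drr (r (k0 + a + 1)) (m : ℕ)
            = ∑ l ∈ Finset.range (a + 1), Gamf typeII dxx drr (r (k0 + a + 1)) l
              * ⟪Vf typeII dxx drr (i : ℕ), Qf typeII dxx drr l⟫_ℝ := by
          rw [← Fin.sum_univ_eq_sum_range (fun l => Gamf typeII dxx drr (r (k0 + a + 1)) l
            * ⟪Vf typeII dxx drr (i : ℕ), Qf typeII dxx drr l⟫_ℝ) (a + 1)]
          exact Finset.sum_congr rfl fun m _ => mul_comm _ _
        rw [hconv]
        linarith [hs]
      have hLSw : L *ᵥ (Sm *ᵥ w)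
          = fun i : Fin (a + 1) => ⟪Vf typeII dxx drr (i : ℕ), r (k0 + a + 1)⟫_ℝ := by
        rw [Matrix.mulVec_mulVec]
        have h1 : L * Sm = (Smᵀ)⁻¹ * ((Z a)ᵀ * R a) := by
          rw [hMzf, ← Matrix.mul_assoc, Matrix.nonsing_inv_mul _ hSTU, Matrix.one_mul]
        rw [h1, hwd, ← Matrix.mulVec_mulVec, Matrix.mulVec_mulVec ((Z a)ᵀ *ᵥ rv),
          Matrix.mul_nonsing_inv _ hMzU, Matrix.one_mulVec]
        conv_lhs => rw [hZf]
        rw [Matrix.transpose_mul, ← Matrix.mulVec_mulVec, Matrix.mulVec_mulVec (Vmᵀ *ᵥ rv),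
          Matrix.nonsing_inv_mul _ hSTU, Matrix.one_mulVec, hVr]
      have hSw : Sm *ᵥ w = Γv := by
        have h2 := hLSw.trans hLG.symm
        have h3 : (L⁻¹ * L) *ᵥ (Sm *ᵥ w) = (L⁻¹ * L) *ᵥ Γv := by
          rw [← Matrix.mulVec_mulVec, ← Matrix.mulVec_mulVec, h2]
        simpa only [Matrix.nonsing_inv_mul _ hdetL, Matrix.one_mulVec] using h3
      have hvec : (β (k0 + a + 1) • (1 : Matrix (Fin d) (Fin d) ℝ)
            - (X a + β (k0 + a + 1) • R a) * ((Z a)ᵀ * R a)⁻¹ * (Z a)ᵀ) *ᵥ rv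
          = β (k0 + a + 1) • rv - ((Pm *ᵥ Γv) + β (k0 + a + 1) • (Qm *ᵥ Γv)) := by
        rw [Matrix.sub_mulVec, Matrix.smul_mulVec, Matrix.one_mulVec]
        congr 1
        rw [← Matrix.mulVec_mulVec, ← Matrix.mulVec_mulVec, ← hwd, Matrix.add_mulVec,
          Matrix.smul_mulVec, hXf, hRf,
          ← Matrix.mulVec_mulVec, ← Matrix.mulVec_mulVec, hSw]
      have hmvE : ∀ (A : Matrix (Fin d) (Fin d) ℝ) (c : Fin d),
          mvE A (r (k0 + a + 1)) c = (A *ᵥ rv) c := by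
        intro A c
        simp [mvE, Matrix.toEuclideanLin_apply, Matrix.mulVec, dotProduct, hrvd]
      rw [hAM a ha]
      ext c
      have lhs1 : (x (k0 + a + 1) + mvE (β (k0 + 1 + a) • (1 : Matrix (Fin d) (Fin d) ℝ)
            - (X a + β (k0 + 1 + a) • R a) * ((Z a)ᵀ * R a)⁻¹ * (Z a)ᵀ) (r (k0 + a + 1))) c
          = x (k0 + a + 1) c + β (k0 + a + 1) * rv c
            - ((Pm *ᵥ Γv) c + β (k0 + a + 1) * (Qm *ᵥ Γv) c) := by
        rw [show (k0 + 1 + a) = k0 + a + 1 from e]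
        have : (x (k0 + a + 1) + mvE (β (k0 + a + 1) • (1 : Matrix (Fin d) (Fin d) ℝ)
              - (X a + β (k0 + a + 1) • R a) * ((Z a)ᵀ * R a)⁻¹ * (Z a)ᵀ) (r (k0 + a + 1))) c
            = x (k0 + a + 1) c + mvE (β (k0 + a + 1) • (1 : Matrix (Fin d) (Fin d) ℝ)
              - (X a + β (k0 + a + 1) • R a) * ((Z a)ᵀ * R a)⁻¹ * (Z a)ᵀ) (r (k0 + a + 1)) c := rfl
        rw [this, hmvE, hvec]
        show _ + (β (k0 + a + 1) * rv c - ((Pm *ᵥ Γv) c + β (k0 + a + 1) * (Qm *ᵥ Γv) c)) = _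
        ring
      rw [lhs1]
      have hPc : (Pm *ᵥ Γv) c = (∑ l ∈ Finset.range (a + 1),
          Gamf typeII dxx drr (r (k0 + a + 1)) l • Pf typeII dxx drr l) c := by
        rw [WithLp.ofLp_sum, Finset.sum_apply]
        simp only [Matrix.mulVec, dotProduct, hPmd, Matrix.of_apply, hΓvd]
        rw [Fin.sum_univ_eq_sum_range (fun l => Pf typeII dxx drr l c
          * Gamf typeII dxx drr (r (k0 + a + 1)) l) (a + 1)]
        exact Finset.sum_congr rfl fun l _ => mul_comm _ _
      have hQc : (Qm *ᵥ Γv) c = (∑ l ∈ Finset.range (a + 1),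
          Gamf typeII dxx drr (r (k0 + a + 1)) l • Qf typeII dxx drr l) c := by
        rw [WithLp.ofLp_sum, Finset.sum_apply]
        simp only [Matrix.mulVec, dotProduct, hQmd, Matrix.of_apply, hΓvd]
        rw [Fin.sum_univ_eq_sum_range (fun l => Qf typeII dxx drr l c
          * Gamf typeII dxx drr (r (k0 + a + 1)) l) (a + 1)]
        exact Finset.sum_congr rfl fun l _ => mul_comm _ _
      rw [hPc, hQc]
      show _ = (x (k0 + a + 1) c - (∑ l ∈ Finset.range (a + 1),
          Gamf typeII dxx drr (r (k0 + a + 1)) l • Pf typeII dxx drr l) c)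
        + β (k0 + a + 1) * (r (k0 + a + 1) c - (∑ l ∈ Finset.range (a + 1),
          Gamf typeII dxx drr (r (k0 + a + 1)) l • Qf typeII dxx drr l) c)
      have : rv c = r (k0 + a + 1) c := rfl
      rw [this]
      ring


end
end

section
/- Consider the fixed-point problem x = g(x) with g(x) = (I−A)x + b, where A ∈ ℝ^{d×d} is nonsingular and b ∈ ℝ^d, and let {x_k} be generated by the full-memory Type-I/Type-II AM (m_k = k) with nonzero mixing parameters β_j. If det(Z_jᵀR_j) ≠ 0 for j = 1, …, k, then: (1) R_k = −AX_k and range(X_k) = K_k(A, r_0); (2) for the Type-I method, the intermediate iterate x̄_k = x_k − X_kΓ_k satisfies x̄_k ∈ x_0 + K_k(A, r_0) and b − Ax̄_k ⊥ K_k(A, r_0), i.e., x̄_k is the k-th iterate of Arnoldi's method started at x_0; (3) for the Type-II method, x̄_k ∈ x_0 + K_k(A, r_0) and b − Ax̄_k ⊥ A·K_k(A, r_0), equivalently x̄_k minimizes ‖b − Az‖₂ over z ∈ x_0 + K_k(A, r_0), i.e., x̄_k is the k-th GMRES iterate started at x_0. -/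
open scoped InnerProductSpace
open Finset Matrix

noncomputable section

lemma mvE_eq {d m : ℕ} (A : Matrix (Fin d) (Fin m) ℝ) (u : E m) :
    mvE A u = A.mulVec u := rfl

lemma mvE_apply {d m : ℕ} (A : Matrix (Fin d) (Fin m) ℝ) (u : E m) (i : Fin d) :
    mvE A u i = A.mulVec u i := rfl

lemma mvE_mul {d m n : ℕ} (A : Matrix (Fin d) (Fin m) ℝ) (B : Matrix (Fin m) (Fin n) ℝ)
    (u : E n) : mvE (A * B) u = mvE A (mvE B u) := by
  ext i; simp [mvE, Matrix.toEuclideanLin_apply, Matrix.mulVec_mulVec]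

lemma mvE_one {d : ℕ} (u : E d) : mvE (1 : Matrix (Fin d) (Fin d) ℝ) u = u := by
  ext i; simp [mvE_apply]

lemma mvE_zero {d m : ℕ} (A : Matrix (Fin d) (Fin m) ℝ) : mvE A (0 : E m) = 0 :=
  map_zero (Matrix.toEuclideanLin A)

lemma mvE_add {d m : ℕ} (A : Matrix (Fin d) (Fin m) ℝ) (u v : E m) :
    mvE A (u + v) = mvE A u + mvE A v := map_add (Matrix.toEuclideanLin A) _ _

lemma mvE_sub {d m : ℕ} (A : Matrix (Fin d) (Fin m) ℝ) (u v : E m) :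
    mvE A (u - v) = mvE A u - mvE A v := map_sub (Matrix.toEuclideanLin A) _ _

lemma mvE_smul {d m : ℕ} (A : Matrix (Fin d) (Fin m) ℝ) (c : ℝ) (u : E m) :
    mvE A (c • u) = c • mvE A u := map_smul (Matrix.toEuclideanLin A) _ _

lemma mvE_sumv {d m : ℕ} (A : Matrix (Fin d) (Fin m) ℝ) {ι : Type*} (s : Finset ι)
    (f : ι → E m) : mvE A (∑ l ∈ s, f l) = ∑ l ∈ s, mvE A (f l) :=
  map_sum (Matrix.toEuclideanLin A) f s

lemma mvE_addM {d m : ℕ} (A B : Matrix (Fin d) (Fin m) ℝ) (u : E m) :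
    mvE (A + B) u = mvE A u + mvE B u := by
  ext i; simp [mvE_apply, Matrix.add_mulVec]

lemma mvE_subM {d m : ℕ} (A B : Matrix (Fin d) (Fin m) ℝ) (u : E m) :
    mvE (A - B) u = mvE A u - mvE B u := by
  ext i; simp [mvE_apply, Matrix.sub_mulVec]

lemma mvE_negM {d m : ℕ} (A : Matrix (Fin d) (Fin m) ℝ) (u : E m) :
    mvE (-A) u = -mvE A u := by
  ext i; simp [mvE_apply, Matrix.neg_mulVec]

lemma mvE_smulM {d m : ℕ} (c : ℝ) (A : Matrix (Fin d) (Fin m) ℝ) (u : E m) :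
    mvE (c • A) u = c • mvE A u := by
  ext i; simp [mvE_apply, Matrix.smul_mulVec]

lemma mvE_sum {d m : ℕ} (X : Matrix (Fin d) (Fin m) ℝ) (w : E m) :
    mvE X w = ∑ l : Fin m, w l • (WithLp.toLp 2 (fun c => X c l) : E d) := by
  ext i
  simp [mvE_apply, Matrix.mulVec, dotProduct, Finset.sum_apply, mul_comm]

/-- Proposition 4.1, parts 1–3, of the paper.  Consider the
linear fixed-point problem `g(x) = (I-A)x + b` with `A` nonsingular, solved by
the full-memory Type-I/Type-II AM (`m_k = k`) with nonzero mixing parameters,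
so that `r_j = b - A x_j`, `x_1 = x_0 + β_0 r_0` and
`x_{j+1} = x_j + G_j r_j` with `G_j = β_j I - (X_j + β_j R_j)(Z_jᵀ R_j)⁻¹ Z_jᵀ`.
If `det(Z_jᵀ R_j) ≠ 0` for `j = 1, …, k`, then:
(1) `R_k = -A X_k` and `range(X_k) = K_k(A, r_0)`;
(2) for the Type-I method (`typeII = false`) the intermediate iterate
    `x̄_k = x_k - X_k Γ_k` satisfies `x̄_k ∈ x_0 + K_k(A, r_0)` and
    `b - A x̄_k ⊥ K_k(A, r_0)` (Arnoldi's method);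
(3) for the Type-II method (`typeII = true`), `x̄_k ∈ x_0 + K_k(A, r_0)`,
    `b - A x̄_k ⊥ A·K_k(A, r_0)`, and `x̄_k` minimizes `‖b - A z‖₂` over
    `z ∈ x_0 + K_k(A, r_0)` (GMRES). -/
theorem stmt_1 {d : ℕ} (A : Matrix (Fin d) (Fin d) ℝ) (b : E d)
    (hA : IsUnit A.det)
    (typeII : Bool) (β : ℕ → ℝ) (hβ : ∀ j, β j ≠ 0)
    (x : ℕ → E d) (r : ℕ → E d) (hr : ∀ j, r j = b - mvE A (x j))
    (k : ℕ) (hk : 1 ≤ k)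
    (X R Z : (j : ℕ) → Matrix (Fin d) (Fin j) ℝ)
    (hX : ∀ j, X j = Matrix.of fun c (i : Fin j) => (x ((i : ℕ) + 1) - x (i : ℕ)) c)
    (hR : ∀ j, R j = Matrix.of fun c (i : Fin j) => (r ((i : ℕ) + 1) - r (i : ℕ)) c)
    (hZ : ∀ j, Z j = if typeII then R j else X j)
    (hdet : ∀ j, 1 ≤ j → j ≤ k → ((Z j)ᵀ * R j).det ≠ 0)
    (h0 : x 1 = x 0 + β 0 • r 0)
    (hAM : ∀ j, 1 ≤ j → j < k → x (j + 1) = x j +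
      mvE (β j • (1 : Matrix (Fin d) (Fin d) ℝ)
            - (X j + β j • R j) * ((Z j)ᵀ * R j)⁻¹ * (Z j)ᵀ) (r j))
    (Γ : ℕ → ℝ)
    (hΓ : ∀ i < k,
      ⟪(if typeII then r (i + 1) - r i else x (i + 1) - x i),
        r k - ∑ l ∈ Finset.range k, Γ l • (r (l + 1) - r l)⟫_ℝ = 0)
    (xbar : E d)
    (hxbar : xbar = x k - ∑ l ∈ Finset.range k, Γ l • (x (l + 1) - x l)) :
    -- (1)  `R_k = -A X_k` and `range(X_k) = K_k(A, r_0)`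
    (R k = -(A * X k)) ∧
    (Submodule.span ℝ (Set.range fun i : Fin k => x ((i : ℕ) + 1) - x (i : ℕ))
      = Submodule.span ℝ (Set.range fun i : Fin k => mvE (A ^ (i : ℕ)) (r 0))) ∧
    -- (2)  Type-I: `x̄_k` is the `k`-th Arnoldi iterate with starting point `x_0`
    (typeII = false →
      xbar - x 0 ∈ Submodule.span ℝ (Set.range fun i : Fin k => mvE (A ^ (i : ℕ)) (r 0)) ∧
      ∀ u ∈ Submodule.span ℝ (Set.range fun i : Fin k => mvE (A ^ (i : ℕ)) (r 0)),
        ⟪u, b - mvE A xbar⟫_ℝ = 0) ∧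
    -- (3)  Type-II: `x̄_k` is the `k`-th GMRES iterate with starting point `x_0`
    (typeII = true →
      xbar - x 0 ∈ Submodule.span ℝ (Set.range fun i : Fin k => mvE (A ^ (i : ℕ)) (r 0)) ∧
      (∀ u ∈ Submodule.span ℝ (Set.range fun i : Fin k => mvE (A ^ (i : ℕ)) (r 0)),
        ⟪mvE A u, b - mvE A xbar⟫_ℝ = 0) ∧
      ∀ z : E d,
        z - x 0 ∈ Submodule.span ℝ (Set.range fun i : Fin k => mvE (A ^ (i : ℕ)) (r 0)) →
        ‖b - mvE A xbar‖ ≤ ‖b - mvE A z‖) := by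
  classical
  -- difference of residuals
  have hΔr : ∀ l : ℕ, r (l + 1) - r l = -mvE A (x (l + 1) - x l) := by
    intro l
    rw [hr (l + 1), hr l, mvE_sub]
    abel
  -- R j = -(A * X j)
  have hRX : ∀ j, R j = -(A * X j) := by
    intro j
    ext c i
    have h1 := congrArg (fun v : E d => v c) (hΔr (i : ℕ))
    simp only [hR, hX, Matrix.of_apply, Matrix.neg_apply, Matrix.mul_apply]
    rw [h1]
    simp [mvE_apply, Matrix.mulVec, dotProduct, mul_sub]
  -- Krylov spaces
  set K : ℕ → Submodule ℝ (E d) :=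
    fun j => Submodule.span ℝ (Set.range fun i : Fin j => mvE (A ^ (i : ℕ)) (r 0)) with hK
  have hKmono : ∀ {a b' : ℕ}, a ≤ b' → K a ≤ K b' := by
    intro a b' hab
    apply Submodule.span_mono
    rintro _ ⟨i, rfl⟩
    exact ⟨Fin.castLE hab i, rfl⟩
  have hAK : ∀ j, ∀ u ∈ K j, mvE A u ∈ K (j + 1) := by
    intro j u hu
    induction hu using Submodule.span_induction with
    | mem y hy =>
      obtain ⟨i, rfl⟩ := hy
      apply Submodule.subset_span
      refine ⟨⟨(i : ℕ) + 1, Nat.succ_lt_succ i.isLt⟩, ?_⟩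
      rw [← mvE_mul, ← pow_succ']
    | zero => rw [mvE_zero]; exact Submodule.zero_mem _
    | add u v _ _ hu hv => rw [mvE_add]; exact Submodule.add_mem _ hu hv
    | smul c u _ hu => rw [mvE_smul]; exact Submodule.smul_mem _ _ hu
  have hr0 : r 0 ∈ K 1 := by
    apply Submodule.subset_span
    exact ⟨0, by simp [mvE_one]⟩
  -- main induction: Δx_i ∈ K (i+1)
  have hΔmem : ∀ i, i < k → x (i + 1) - x i ∈ K (i + 1) := by
    intro i
    induction i using Nat.strong_induction_on with
    | _ i IH =>
    intro hik
    have hrmem : ∀ j, j ≤ i → r j ∈ K (j + 1) := by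
      intro j hj
      have hx0 : x j - x 0 = ∑ l ∈ Finset.range j, (x (l + 1) - x l) :=
        (Finset.sum_range_sub (fun l => x l) j).symm
      have hxmem : x j - x 0 ∈ K j := by
        rw [hx0]
        refine Submodule.sum_mem _ fun l hl => ?_
        have hl' := Finset.mem_range.mp hl
        exact hKmono (by omega) (IH l (by omega) (by omega))
      have hrj : r j = r 0 - mvE A (x j - x 0) := by
        rw [hr j, hr 0, mvE_sub]
        abel
      rw [hrj]
      exact Submodule.sub_mem _ (hKmono (by omega) hr0) (hAK j _ hxmem)
    rcases Nat.eq_zero_or_pos i with hi0 | hi1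
    · subst hi0
      have : x 1 - x 0 = β 0 • r 0 := by rw [h0]; abel
      rw [this]
      exact Submodule.smul_mem _ _ hr0
    · have hrec := hAM i hi1 hik
      have hΔx : x (i + 1) - x i =
          mvE (β i • (1 : Matrix (Fin d) (Fin d) ℝ)
            - (X i + β i • R i) * ((Z i)ᵀ * R i)⁻¹ * (Z i)ᵀ) (r i) := by
        rw [hrec]; abel
      rw [hΔx, mvE_subM, mvE_smulM, mvE_one, Matrix.mul_assoc, mvE_mul, mvE_addM, mvE_smulM]
      set v : E i := mvE (((Z i)ᵀ * R i)⁻¹ * (Z i)ᵀ) (r i) with hv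
      have hXmem : mvE (X i) v ∈ K i := by
        rw [mvE_sum]
        refine Submodule.sum_mem _ fun l _ => Submodule.smul_mem _ _ ?_
        have hcol : (WithLp.toLp 2 (fun c => (X i) c l) : E d) = x ((l : ℕ) + 1) - x (l : ℕ) := by
          ext c; simp [hX]
        rw [hcol]
        exact hKmono (by omega) (IH (l : ℕ) l.isLt (by omega))
      have hRmem : mvE (R i) v ∈ K (i + 1) := by
        rw [hRX i, mvE_negM, mvE_mul]
        exact Submodule.neg_mem _ (hAK i _ hXmem)
      have hri : r i ∈ K (i + 1) := hrmem i le_rfl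
      refine Submodule.sub_mem _ (Submodule.smul_mem _ _ hri) ?_
      exact Submodule.add_mem _ (hKmono (by omega) hXmem) (Submodule.smul_mem _ _ hRmem)
  -- the span equality
  have hXv : ∀ v : Fin k → ℝ, (X k).mulVec v = 0 → v = 0 := by
    intro v hv
    have hRv : (R k).mulVec v = 0 := by
      rw [hRX k, Matrix.neg_mulVec, ← Matrix.mulVec_mulVec, hv, Matrix.mulVec_zero, neg_zero]
    have hZv : ((Z k)ᵀ * R k).mulVec v = 0 := by
      rw [← Matrix.mulVec_mulVec, hRv, Matrix.mulVec_zero]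
    have hU : IsUnit ((Z k)ᵀ * R k).det := isUnit_iff_ne_zero.mpr (hdet k hk le_rfl)
    calc v = (((Z k)ᵀ * R k)⁻¹ * ((Z k)ᵀ * R k)).mulVec v := by
            rw [Matrix.nonsing_inv_mul _ hU, Matrix.one_mulVec]
      _ = 0 := by rw [← Matrix.mulVec_mulVec, hZv, Matrix.mulVec_zero]
  have hli : LinearIndependent ℝ (fun i : Fin k => x ((i : ℕ) + 1) - x (i : ℕ)) := by
    rw [Fintype.linearIndependent_iff]
    intro g hg
    have hcols : ∀ l : Fin k, (WithLp.toLp 2 (fun c => (X k) c l) : E d) = x ((l : ℕ) + 1) - x (l : ℕ) := by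
      intro l; ext c; simp [hX]
    have hXg : mvE (X k) (WithLp.toLp 2 g) = 0 := by
      rw [mvE_sum]
      rw [← hg]
      exact Finset.sum_congr rfl fun l _ => by rw [hcols l]
    have := hXv g (by rw [← mvE_eq, hXg]; rfl)
    intro i; rw [this]; rfl
  have hle : Submodule.span ℝ (Set.range fun i : Fin k => x ((i : ℕ) + 1) - x (i : ℕ)) ≤ K k := by
    rw [Submodule.span_le]
    rintro _ ⟨i, rfl⟩
    exact hKmono (Nat.succ_le_of_lt i.isLt) (hΔmem (i : ℕ) i.isLt)
  have hspan : Submodule.span ℝ (Set.range fun i : Fin k => x ((i : ℕ) + 1) - x (i : ℕ)) = K k := by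
    apply Submodule.eq_of_le_of_finrank_le hle
    have h1 : Module.finrank ℝ
        (Submodule.span ℝ (Set.range fun i : Fin k => x ((i : ℕ) + 1) - x (i : ℕ))) = k := by
      rw [finrank_span_eq_card hli, Fintype.card_fin]
    have h2 : Module.finrank ℝ (K k) ≤ k := by
      have := finrank_range_le_card (R := ℝ) (fun i : Fin k => mvE (A ^ (i : ℕ)) (r 0))
      rw [Fintype.card_fin] at this
      exact this
    omega
  have hspan' : Submodule.span ℝ (Set.range fun i : Fin k => x ((i : ℕ) + 1) - x (i : ℕ))
      = Submodule.span ℝ (Set.range fun i : Fin k => mvE (A ^ (i : ℕ)) (r 0)) := hspan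
  -- residual identity
  have hres : b - mvE A xbar = r k - ∑ l ∈ Finset.range k, Γ l • (r (l + 1) - r l) := by
    have hS : mvE A (∑ l ∈ Finset.range k, Γ l • (x (l + 1) - x l))
        = -∑ l ∈ Finset.range k, Γ l • (r (l + 1) - r l) := by
      rw [mvE_sumv, ← Finset.sum_neg_distrib]
      refine Finset.sum_congr rfl fun l _ => ?_
      rw [mvE_smul, hΔr l, smul_neg, neg_neg]
    rw [hxbar, mvE_sub, hS, hr k]
    abel
  -- xbar - x 0 ∈ Krylov space
  have hxbarmem : xbar - x 0 ∈ K k := by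
    rw [← hspan]
    have key : ∑ l ∈ Finset.range k, (1 - Γ l) • (x (l + 1) - x l)
        = x k - ∑ l ∈ Finset.range k, Γ l • (x (l + 1) - x l) - x 0 := by
      have e1 : ∀ l ∈ Finset.range k, (1 - Γ l) • (x (l + 1) - x l)
          = (x (l + 1) - x l) - Γ l • (x (l + 1) - x l) := fun l _ => by
        rw [sub_smul, one_smul]
      rw [Finset.sum_congr rfl e1, Finset.sum_sub_distrib, Finset.sum_range_sub (fun l => x l)]
      abel
    rw [hxbar, ← key]
    exact Submodule.sum_mem _ fun l hl => Submodule.smul_mem _ _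
      (Submodule.subset_span ⟨⟨l, Finset.mem_range.mp hl⟩, rfl⟩)
  refine ⟨hRX k, hspan', ?_, ?_⟩
  · -- Type I
    intro htype
    refine ⟨hxbarmem, ?_⟩
    intro u hu
    rw [hres]
    rw [← hspan'] at hu
    induction hu using Submodule.span_induction with
    | mem y hy =>
      obtain ⟨i, rfl⟩ := hy
      have := hΓ (i : ℕ) i.isLt
      simpa [htype] using this
    | zero => exact inner_zero_left _
    | add u v _ _ hu hv => rw [inner_add_left, hu, hv, add_zero]
    | smul c u _ hu => rw [real_inner_smul_left, hu, mul_zero]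
  · -- Type II
    intro htype
    have horth : ∀ u ∈ Submodule.span ℝ (Set.range fun i : Fin k => mvE (A ^ (i : ℕ)) (r 0)),
        ⟪mvE A u, b - mvE A xbar⟫_ℝ = 0 := by
      intro u hu
      rw [hres]
      rw [← hspan'] at hu
      induction hu using Submodule.span_induction with
      | mem y hy =>
        obtain ⟨i, rfl⟩ := hy
        have h1 := hΓ (i : ℕ) i.isLt
        rw [htype] at h1
        simp only [if_true] at h1
        rw [show mvE A (x ((i : ℕ) + 1) - x (i : ℕ)) = -(r ((i : ℕ) + 1) - r (i : ℕ)) from by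
          rw [hΔr (i : ℕ), neg_neg]]
        rw [inner_neg_left, h1, neg_zero]
      | zero => rw [mvE_zero]; exact inner_zero_left _
      | add u v _ _ hu hv => rw [mvE_add, inner_add_left, hu, hv, add_zero]
      | smul c u _ hu => rw [mvE_smul, real_inner_smul_left, hu, mul_zero]
    refine ⟨hxbarmem, horth, ?_⟩
    intro z hz
    have hmem : xbar - z ∈ K k := by
      have := Submodule.sub_mem _ hxbarmem hz
      simpa using this
    have h1 : ⟪b - mvE A xbar, mvE A (xbar - z)⟫_ℝ = 0 := by
      rw [real_inner_comm]; exact horth _ hmem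
    have h2 : b - mvE A z = (b - mvE A xbar) + mvE A (xbar - z) := by
      rw [mvE_sub]; abel
    rw [h2]
    have h3 : ‖b - mvE A xbar‖ ^ 2 ≤ ‖(b - mvE A xbar) + mvE A (xbar - z)‖ ^ 2 := by
      rw [norm_add_sq_real, h1]
      nlinarith [sq_nonneg ‖mvE A (xbar - z)‖]
    calc ‖b - mvE A xbar‖ = Real.sqrt (‖b - mvE A xbar‖ ^ 2) :=
          (Real.sqrt_sq (norm_nonneg _)).symm
      _ ≤ Real.sqrt (‖(b - mvE A xbar) + mvE A (xbar - z)‖ ^ 2) := Real.sqrt_le_sqrt h3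
      _ = ‖(b - mvE A xbar) + mvE A (xbar - z)‖ := Real.sqrt_sq (norm_nonneg _)

end
end

section
/- Consider the fixed-point problem x = g(x) with g(x) = (I−A)x + b, where A ∈ ℝ^{d×d} is positive definite (its symmetric part (A+Aᵀ)/2 has only positive eigenvalues) and b ∈ ℝ^d, and let {x_k} be generated by the full-memory Type-I/Type-II AM (m_k = k) with nonzero mixing parameters. If r_j ≠ 0 for j = 0, …, k, then det(Z_jᵀR_j) ≠ 0 for j = 1, …, k; moreover the constructions of the modified historical sequences P_k and Q_k are well defined and satisfy Q_k = −AP_k and range(P_k) = range(X_k) = K_k(A, r_0). -/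
open scoped InnerProductSpace
open Finset Matrix

noncomputable section

/-- Identity cast from plain functions to Euclidean space. -/
def toE {d : ℕ} (v : Fin d → ℝ) : E d := WithLp.toLp 2 v

/-- Identity cast from Euclidean space to plain functions. -/
def fromE {d : ℕ} (v : E d) : Fin d → ℝ := v

@[simp] lemma toE_apply {d : ℕ} (v : Fin d → ℝ) (a : Fin d) : toE v a = v a := rfl
@[simp] lemma fromE_apply {d : ℕ} (v : E d) (a : Fin d) : fromE v a = v a := rfl

section AMaux
variable {d : ℕ}

/-- Sequential (oblique) Gram–Schmidt step: orthogonalize `v` against the list `us`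
with respect to the bilinear form `Φ`, in order. -/
def seqGS (Φ : E d → E d →ₗ[ℝ] ℝ) : List (E d) → E d → E d
  | [], v => v
  | u :: us, v => seqGS Φ us (v - (Φ u v / Φ u u) • u)

lemma seqGS_sub_mem (Φ : E d → E d →ₗ[ℝ] ℝ) (us : List (E d)) (v : E d) :
    v - seqGS Φ us v ∈ Submodule.span ℝ {w | w ∈ us} := by
  induction us generalizing v with
  | nil => simp [seqGS]
  | cons u us ih =>
      have h1 := ih (v - (Φ u v / Φ u u) • u)
      have hle : Submodule.span ℝ {w | w ∈ us} ≤ Submodule.span ℝ {w | w ∈ u :: us} :=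
        Submodule.span_mono (fun w hw => List.mem_cons_of_mem _ hw)
      have hu : u ∈ Submodule.span ℝ {w | w ∈ u :: us} :=
        Submodule.subset_span List.mem_cons_self
      have hrw : v - seqGS Φ (u::us) v = (Φ u v / Φ u u) • u +
          ((v - (Φ u v / Φ u u) • u) - seqGS Φ us (v - (Φ u v / Φ u u) • u)) := by
        show v - seqGS Φ us (v - (Φ u v / Φ u u) • u) = _
        abel
      rw [hrw]
      exact Submodule.add_mem _ (Submodule.smul_mem _ _ hu) (hle h1)

lemma seqGS_inner_eq (Φ : E d → E d →ₗ[ℝ] ℝ) (u : E d) (us : List (E d)) (v : E d)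
    (h : ∀ w ∈ us, Φ u w = 0) : Φ u (seqGS Φ us v) = Φ u v := by
  have hker : Φ u (v - seqGS Φ us v) = 0 := by
    have hle : Submodule.span ℝ {w | w ∈ us} ≤ LinearMap.ker (Φ u) := by
      rw [Submodule.span_le]; intro w hw; exact h w hw
    exact hle (seqGS_sub_mem Φ us v)
  rw [map_sub] at hker
  linarith

lemma seqGS_orth (Φ : E d → E d →ₗ[ℝ] ℝ) (us : List (E d)) (v : E d)
    (hpw : us.Pairwise (fun a b => Φ a b = 0)) (hdiag : ∀ u ∈ us, Φ u u ≠ 0) :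
    ∀ u ∈ us, Φ u (seqGS Φ us v) = 0 := by
  induction us generalizing v with
  | nil => simp
  | cons u us ih =>
    intro w hw
    obtain ⟨hhead, htail⟩ := List.pairwise_cons.mp hpw
    rcases List.mem_cons.mp hw with rfl | hw'
    · have hne := hdiag w List.mem_cons_self
      have hwv : Φ w (v - (Φ w v / Φ w w) • w) = 0 := by
        rw [map_sub, _root_.map_smul, smul_eq_mul]
        field_simp
        simp
      show Φ w (seqGS Φ us (v - (Φ w v / Φ w w) • w)) = 0
      rw [seqGS_inner_eq Φ w us _ hhead, hwv]
    · exact ih _ htail (fun z hz => hdiag z (List.mem_cons_of_mem _ hz)) w hw'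

/-- The list of the first `n` Gram–Schmidt vectors. -/
def gsList (Φ : E d → E d →ₗ[ℝ] ℝ) (s : ℕ → E d) : ℕ → List (E d)
  | 0 => []
  | n+1 => gsList Φ s n ++ [seqGS Φ (gsList Φ s n) (s n)]

/-- The Gram–Schmidt sequence (`gsP Φ s j` is built from `s (j-1)`). -/
def gsP (Φ : E d → E d →ₗ[ℝ] ℝ) (s : ℕ → E d) (j : ℕ) : E d :=
  seqGS Φ (gsList Φ s (j-1)) (s (j-1))

lemma gsList_eq (Φ : E d → E d →ₗ[ℝ] ℝ) (s : ℕ → E d) (n : ℕ) :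
    gsList Φ s n = (List.range n).map (fun i => gsP Φ s (i+1)) := by
  induction n with
  | zero => rfl
  | succ n ih =>
      rw [gsList, List.range_succ, List.map_append, ← ih]
      rfl

end AMaux

set_option maxHeartbeats 2000000

/-- Proposition 4.1, second half, of the paper.  For the linear
fixed-point problem `g(x) = (I-A)x + b` with `A` positive definite (its
symmetric part has only positive eigenvalues, i.e. `yᵀAy > 0` for `y ≠ 0`),
solved by the full-memory Type-I/Type-II AM with nonzero mixing parameters, if
`r_j ≠ 0` for `j = 0, …, k`, then `det(Z_jᵀ R_j) ≠ 0` for `j = 1, …, k`;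
moreover the modified historical sequences `P_k`, `Q_k` are well defined
(there exist `p, q, ζ` satisfying the defining recursions with `v_jᵀ q_j ≠ 0`)
and satisfy `Q_k = -A P_k` and `range(P_k) = range(X_k) = K_k(A, r_0)`. -/
theorem stmt_2 {d : ℕ} (A : Matrix (Fin d) (Fin d) ℝ) (b : E d)
    (hpd : ∀ y : E d, y ≠ 0 → 0 < ⟪y, mvE A y⟫_ℝ)
    (typeII : Bool) (β : ℕ → ℝ) (hβ : ∀ j, β j ≠ 0)
    (x : ℕ → E d) (r : ℕ → E d) (hr : ∀ j, r j = b - mvE A (x j))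
    (k : ℕ) (hk : 1 ≤ k)
    (X R Z : (j : ℕ) → Matrix (Fin d) (Fin j) ℝ)
    (hX : ∀ j, X j = Matrix.of fun c (i : Fin j) => (x ((i : ℕ) + 1) - x (i : ℕ)) c)
    (hR : ∀ j, R j = Matrix.of fun c (i : Fin j) => (r ((i : ℕ) + 1) - r (i : ℕ)) c)
    (hZ : ∀ j, Z j = if typeII then R j else X j)
    (h0 : x 1 = x 0 + β 0 • r 0)
    (hAM : ∀ j, 1 ≤ j → j < k → x (j + 1) = x j +
      mvE (β j • (1 : Matrix (Fin d) (Fin d) ℝ)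
            - (X j + β j • R j) * ((Z j)ᵀ * R j)⁻¹ * (Z j)ᵀ) (r j))
    (hne : ∀ j ≤ k, r j ≠ 0) :
    -- nonsingularity of `Z_jᵀ R_j` for `j = 1, …, k`
    (∀ j, 1 ≤ j → j ≤ k → ((Z j)ᵀ * R j).det ≠ 0) ∧
    -- the modified historical sequences are well defined and satisfy
    -- `Q_k = -A P_k`, `range(P_k) = range(X_k) = K_k(A, r_0)`
    ∃ (p q : ℕ → E d) (ζ : ℕ → ℕ → ℝ),
      (p 1 = x 1 - x 0 ∧ q 1 = r 1 - r 0) ∧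
      (∀ j, 2 ≤ j → j ≤ k →
        p j = (x j - x (j - 1)) - ∑ i ∈ Finset.range (j - 1), ζ j i • p (1 + i) ∧
        q j = (r j - r (j - 1)) - ∑ i ∈ Finset.range (j - 1), ζ j i • q (1 + i) ∧
        ∀ i < j - 1, ⟪(if typeII then q (1 + i) else p (1 + i)), q j⟫_ℝ = 0) ∧
      (∀ j, 1 ≤ j → j ≤ k → ⟪(if typeII then q j else p j), q j⟫_ℝ ≠ 0) ∧
      (Matrix.of fun c (i : Fin k) => q (1 + (i : ℕ)) c)
        = -(A * Matrix.of fun c (i : Fin k) => p (1 + (i : ℕ)) c) ∧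
      Submodule.span ℝ (Set.range fun i : Fin k => p ((i : ℕ) + 1))
        = Submodule.span ℝ (Set.range fun i : Fin k => x ((i : ℕ) + 1) - x (i : ℕ)) ∧
      Submodule.span ℝ (Set.range fun i : Fin k => x ((i : ℕ) + 1) - x (i : ℕ))
        = Submodule.span ℝ (Set.range fun i : Fin k => mvE (A ^ (i : ℕ)) (r 0)) := by
  classical
  set s : ℕ → E d := fun n => x (n+1) - x n with hs_def
  -- inner product vs dot product
  have hinner : ∀ u v : E d, ⟪u, v⟫_ℝ = (u : Fin d → ℝ) ⬝ᵥ (v : Fin d → ℝ) := fun u v => by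
    simp [PiLp.inner_apply, dotProduct, mul_comm]
  have hApos : ∀ y : E d, y ≠ 0 → 0 < (y : Fin d → ℝ) ⬝ᵥ (A *ᵥ y) := by
    intro y hy; have := hpd y hy; rwa [hinner] at this
  have hAinj : ∀ y : E d, A *ᵥ (y : Fin d → ℝ) = 0 → y = 0 := by
    intro y hy
    by_contra h
    have := hApos y h
    rw [hy, dotProduct_zero] at this
    exact lt_irrefl _ this
  have hs0 : s 0 = β 0 • r 0 := by rw [hs_def]; simp [h0]
  have hdr : ∀ n, r (n+1) - r n = -(mvE A (s n)) := by
    intro n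
    rw [hr (n+1), hr n, hs_def]
    show _ = -(Matrix.toEuclideanLin A (x (n+1) - x n))
    rw [map_sub]
    abel
  have hXmul : ∀ (j : ℕ) (c : Fin j → ℝ),
      toE (X j *ᵥ c) = ∑ i : Fin j, c i • s (i : ℕ) := by
    intro j c
    ext a
    rw [hX]
    show ∑ i : Fin j, (x ((i:ℕ)+1) - x (i:ℕ)) a * c i = _
    rw [WithLp.ofLp_sum, Finset.sum_apply]
    refine Finset.sum_congr rfl fun i _ => ?_
    show _ = (c i • s (i:ℕ)) a
    rw [hs_def]
    show _ = c i * (x ((i:ℕ)+1) - x (i:ℕ)) a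
    ring
  have hXmem : ∀ (j : ℕ) (c : Fin j → ℝ),
      toE (X j *ᵥ c) ∈ Submodule.span ℝ (Set.range fun i : Fin j => s (i:ℕ)) := by
    intro j c
    rw [hXmul]
    exact Submodule.sum_mem _ fun i _ =>
      Submodule.smul_mem _ _ (Submodule.subset_span ⟨i, rfl⟩)
  have hRXm : ∀ j, R j = -(A * X j) := by
    intro j
    ext a i
    rw [hR]
    show (r ((i:ℕ)+1) - r (i:ℕ)) a = _
    rw [hdr (i:ℕ)]
    show -(A *ᵥ (s (i:ℕ) : Fin d → ℝ)) a = (-(A * X j)) a i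
    rw [Matrix.neg_apply, Matrix.mul_apply]
    show -(∑ l, A a l * s (i:ℕ) l) = -(∑ l, A a l * X j l i)
    rw [hX]
    rfl
  have hdet0 : ∀ j : ℕ, LinearIndependent ℝ (fun i : Fin j => s (i:ℕ)) →
      ((Z j)ᵀ * R j).det ≠ 0 := by
    intro j hind hdet
    obtain ⟨v, hv0, hvz⟩ := Matrix.exists_mulVec_eq_zero_iff.mpr hdet
    have hyne : toE (X j *ᵥ v) ≠ 0 := by
      intro h0'
      rw [hXmul] at h0'
      have := Fintype.linearIndependent_iff.mp hind v h0'
      exact hv0 (funext fun i => this i)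
    have hzero : (Z j *ᵥ v) ⬝ᵥ (R j *ᵥ v) = 0 := by
      have h1 : v ⬝ᵥ (((Z j)ᵀ * R j) *ᵥ v) = 0 := by rw [hvz, dotProduct_zero]
      rwa [← Matrix.mulVec_mulVec, Matrix.dotProduct_mulVec, Matrix.vecMul_transpose] at h1
    have hRv : R j *ᵥ v = -(A *ᵥ (X j *ᵥ v)) := by
      rw [hRXm, Matrix.neg_mulVec, Matrix.mulVec_mulVec]
    cases typeII with
    | false =>
        rw [hZ] at hzero
        simp only [Bool.false_eq_true, if_false] at hzero
        rw [hRv, dotProduct_neg] at hzero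
        have := hApos _ hyne
        rw [neg_eq_zero] at hzero
        exact absurd hzero (ne_of_gt this)
    | true =>
        rw [hZ] at hzero
        simp only [if_true] at hzero
        rw [hRv] at hzero
        rw [neg_dotProduct, dotProduct_neg, neg_neg,
          dotProduct_self_eq_zero] at hzero
        exact hyne (hAinj (toE (X j *ᵥ v)) hzero)

  -- Krylov subspaces
  set Kry : ℕ → Submodule ℝ (E d) :=
    (fun j => Submodule.span ℝ (Set.range fun i : Fin j => mvE (A ^ (i : ℕ)) (r 0)))
    with hKry_def
  have hKmono : ∀ {a b' : ℕ}, a ≤ b' → Kry a ≤ Kry b' := by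
    intro a b' hab
    apply Submodule.span_mono
    rintro _ ⟨i, rfl⟩
    exact ⟨Fin.castLE hab i, rfl⟩
  have hmvE_mul : ∀ (M N : Matrix (Fin d) (Fin d) ℝ) (u : E d),
      mvE (M * N) u = mvE M (mvE N u) := by
    intro M N u
    show WithLp.toLp 2 ((M * N) *ᵥ (u : Fin d → ℝ)) = WithLp.toLp 2 (M *ᵥ (N *ᵥ u))
    rw [Matrix.mulVec_mulVec]
  have hmvE_one : ∀ u : E d, mvE (1 : Matrix (Fin d) (Fin d) ℝ) u = u := by
    intro u
    show WithLp.toLp 2 (1 *ᵥ (u : Fin d → ℝ)) = u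
    rw [Matrix.one_mulVec]
  have hKA : ∀ (j : ℕ) (v : E d), v ∈ Kry j → mvE A v ∈ Kry (j+1) := by
    intro j v hv
    have hlin : mvE A = Matrix.toEuclideanLin A := rfl
    induction hv using Submodule.span_induction with
    | mem w hw =>
        obtain ⟨i, rfl⟩ := hw
        rw [← hmvE_mul, ← pow_succ']
        exact Submodule.subset_span ⟨⟨(i:ℕ)+1, by omega⟩, rfl⟩
    | zero => rw [hlin, map_zero]; exact Submodule.zero_mem _
    | add u w _ _ hu hw => rw [hlin, map_add]; exact Submodule.add_mem _ hu hw
    | smul a u _ hu => rw [hlin, _root_.map_smul]; exact Submodule.smul_mem _ _ hu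
  have hr0K : ∀ {j : ℕ}, 1 ≤ j → r 0 ∈ Kry j := by
    intro j hj
    have : mvE (A ^ (0:ℕ)) (r 0) = r 0 := by rw [pow_zero, hmvE_one]
    exact this ▸ Submodule.subset_span ⟨⟨0, by omega⟩, rfl⟩
  have hsnoc : ∀ m : ℕ, (fun i : Fin (m+1) => s (i:ℕ)) =
      Fin.snoc (fun i : Fin m => s (i:ℕ)) (s m) := by
    intro m
    funext i
    refine Fin.lastCases ?_ ?_ i
    · simp
    · intro i; simp
  -- main induction
  have key : ∀ j, j ≤ k → LinearIndependent ℝ (fun i : Fin j => s (i:ℕ)) ∧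
      Submodule.span ℝ (Set.range fun i : Fin j => s (i:ℕ)) = Kry j := by
    intro j
    induction j with
    | zero =>
        intro _
        constructor
        · exact linearIndependent_empty_type
        · rw [hKry_def]
          simp
    | succ j ih =>
        intro hjk
        obtain ⟨hind, hspan⟩ := ih (by omega)
        rcases Nat.eq_zero_or_pos j with rfl | hj1
        · have hne0 : s 0 ≠ 0 := by
            rw [hs0]
            exact smul_ne_zero (hβ 0) (hne 0 (by omega))
          constructor
          · haveI : Unique (Fin (0+1)) := inferInstanceAs (Unique (Fin 1))
            exact linearIndependent_unique_iff.mpr (by simpa using hne0)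
          · have e1 : (Set.range fun i : Fin 1 => s (i:ℕ)) = {s 0} := by
              rw [Set.range_unique]; rfl
            have e2 : (Set.range fun i : Fin 1 => mvE (A ^ (i:ℕ)) (r 0)) = {r 0} := by
              rw [Set.range_unique]
              show ({mvE (A ^ ((default : Fin 1):ℕ)) (r 0)} : Set (E d)) = _
              norm_num [hmvE_one]
            rw [hKry_def]
            show _ = Submodule.span ℝ (Set.range fun i : Fin 1 => mvE (A ^ (i:ℕ)) (r 0))
            rw [e1, e2, hs0]
            exact Submodule.span_singleton_smul_eq (isUnit_iff_ne_zero.mpr (hβ 0)) _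
        · -- j ≥ 1
          have hd := hdet0 j hind
          have hAMj := hAM j hj1 (by omega)
          set γ : Fin j → ℝ := -(((Z j)ᵀ * R j)⁻¹ *ᵥ ((Z j)ᵀ *ᵥ fromE (r j))) with hγ_def
          set rb : Fin d → ℝ := fromE (r j) + R j *ᵥ γ with hrb_def
          have hBinv : ((Z j)ᵀ * R j) * ((Z j)ᵀ * R j)⁻¹ = 1 :=
            Matrix.mul_nonsing_inv _ (isUnit_iff_ne_zero.mpr hd)
          have hsj : s j = toE (X j *ᵥ γ + β j • rb) := by
            have h1 : s j = toE ((β j • (1:Matrix (Fin d) (Fin d) ℝ)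
                  - (X j + β j • R j) * ((Z j)ᵀ * R j)⁻¹ * (Z j)ᵀ) *ᵥ fromE (r j)) := by
              show x (j+1) - x j = mvE (β j • (1:Matrix (Fin d) (Fin d) ℝ)
                  - (X j + β j • R j) * ((Z j)ᵀ * R j)⁻¹ * (Z j)ᵀ) (r j)
              rw [hAMj]
              abel
            rw [h1]
            refine congrArg toE ?_
            rw [Matrix.sub_mulVec, Matrix.smul_mulVec, Matrix.one_mulVec,
              ← Matrix.mulVec_mulVec, ← Matrix.mulVec_mulVec, Matrix.add_mulVec,
              Matrix.smul_mulVec, hrb_def, hγ_def, Matrix.mulVec_neg, Matrix.mulVec_neg]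
            module
          have hZrb : (Z j)ᵀ *ᵥ rb = 0 := by
            rw [hrb_def, Matrix.mulVec_add, hγ_def, Matrix.mulVec_neg, Matrix.mulVec_mulVec,
              Matrix.mulVec_neg, Matrix.mulVec_mulVec, ← Matrix.mul_assoc, hBinv,
              Matrix.one_mulVec]
            simp
          have hAXg : A *ᵥ (X j *ᵥ γ) = -(R j *ᵥ γ) := by
            rw [hRXm, Matrix.neg_mulVec, Matrix.mulVec_mulVec, neg_neg]
          have hXgE : ∀ c : Fin j → ℝ, toE (X j *ᵥ c) ∈
              Submodule.span ℝ (Set.range fun i : Fin j => s (i:ℕ)) := fun c => hXmem j c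
          have hnotmem : s j ∉ Submodule.span ℝ (Set.range fun i : Fin j => s (i:ℕ)) := by
            intro hmem
            have hrbmem : toE rb ∈ Submodule.span ℝ (Set.range fun i : Fin j => s (i:ℕ)) := by
              have he : toE rb = (β j)⁻¹ • (s j - toE (X j *ᵥ γ)) := by
                ext a
                have h5 := congrFun (congrArg WithLp.ofLp hsj) a
                simp only [toE_apply, Pi.add_apply, Pi.smul_apply, smul_eq_mul] at h5
                show rb a = ((β j)⁻¹ • (s j - toE (X j *ᵥ γ))) a
                simp only [PiLp.smul_apply, PiLp.sub_apply, toE_apply, smul_eq_mul]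
                rw [h5]
                field_simp
                rw [add_sub_cancel_left]
                rw [mul_div_cancel_right₀ _ (hβ j)]
              rw [he]
              exact Submodule.smul_mem _ _ (Submodule.sub_mem _ hmem (hXgE γ))
            obtain ⟨c, hc⟩ := (Submodule.mem_span_range_iff_exists_fun ℝ).mp hrbmem
            have hrbX : rb = X j *ᵥ c := by
              have := hXmul j c
              rw [← this] at hc
              exact congrArg fromE hc.symm
            have hdot : (Z j *ᵥ c) ⬝ᵥ (X j *ᵥ c) = 0 := by
              have h1 : c ⬝ᵥ ((Z j)ᵀ *ᵥ rb) = 0 := by rw [hZrb, dotProduct_zero]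
              rwa [Matrix.dotProduct_mulVec, Matrix.vecMul_transpose, hrbX] at h1
            have hrb0 : rb = 0 := by
              rw [hrbX]
              cases typeII with
              | false =>
                  rw [hZ] at hdot
                  simp only [Bool.false_eq_true, if_false] at hdot
                  exact dotProduct_self_eq_zero.mp hdot
              | true =>
                  rw [hZ] at hdot
                  simp only [if_true] at hdot
                  have hRc : R j *ᵥ c = -(A *ᵥ (X j *ᵥ c)) := by
                    rw [hRXm, Matrix.neg_mulVec, Matrix.mulVec_mulVec]
                  rw [hRc, neg_dotProduct, neg_eq_zero, dotProduct_comm] at hdot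
                  by_contra hy
                  have : toE (X j *ᵥ c) ≠ 0 := fun h => hy (congrArg fromE h)
                  exact absurd hdot (ne_of_gt (hApos (toE (X j *ᵥ c)) this))
            have hrj1 : r (j+1) = 0 := by
              have h2 : r (j+1) = r j + (r (j+1) - r j) := by abel
              rw [hdr j] at h2
              have h3 : mvE A (s j) = toE (-(R j *ᵥ γ)) := by
                show toE (A *ᵥ fromE (s j)) = _
                refine congrArg toE ?_
                have h6 : fromE (s j) = X j *ᵥ γ + β j • rb := congrArg fromE hsj
                rw [h6, hrb0, smul_zero, add_zero, hAXg]
              rw [h3] at h2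
              have h4 : r (j+1) = toE rb := by
                rw [h2]
                ext a
                simp only [toE_apply, hrb_def, Pi.add_apply, fromE_apply]
                show r j a + (-(-(R j *ᵥ γ))) a = r j a + (R j *ᵥ γ) a
                simp
              rw [h4, hrb0]
              rfl
            exact hne (j+1) (by omega) hrj1
          have hind' : LinearIndependent ℝ (fun i : Fin (j+1) => s (i:ℕ)) := by
            rw [hsnoc j, linearIndependent_fin_snoc]
            exact ⟨hind, hnotmem⟩
          refine ⟨hind', ?_⟩
          have hsjK : s j ∈ Kry (j+1) := by
            have hXgK : toE (X j *ᵥ γ) ∈ Kry (j+1) :=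
              hKmono (Nat.le_succ j) (hspan ▸ hXmem j γ)
            have hrjK : r j ∈ Kry (j+1) := by
              have hxj : (x j - x 0 : E d) ∈ Kry j := by
                have ht : x j - x 0 = ∑ i ∈ Finset.range j, s i := by
                  rw [hs_def]
                  exact (Finset.sum_range_sub (fun n => x n) j).symm
                rw [ht, ← Fin.sum_univ_eq_sum_range (fun i => s i) j]
                exact Submodule.sum_mem _ fun i _ =>
                  hspan ▸ Submodule.subset_span ⟨i, rfl⟩
              have hrj : r j = r 0 - mvE A (x j - x 0) := by
                rw [hr j, hr 0]
                show _ = b - Matrix.toEuclideanLin A (x 0) - Matrix.toEuclideanLin A (x j - x 0)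
                rw [map_sub]
                abel
              rw [hrj]
              exact Submodule.sub_mem _ (hr0K (by omega)) (hKA j _ hxj)
            have hrbK : toE rb ∈ Kry (j+1) := by
              have hRgK : toE (R j *ᵥ γ) ∈ Kry (j+1) := by
                have he : toE (R j *ᵥ γ) = -(mvE A (toE (X j *ᵥ γ))) := by
                  show toE (R j *ᵥ γ) = toE (-(A *ᵥ (X j *ᵥ γ)))
                  refine congrArg toE ?_
                  show R j *ᵥ γ = -(A *ᵥ (X j *ᵥ γ))
                  rw [hAXg, neg_neg]
                rw [he]
                exact Submodule.neg_mem _ (hKA j _ (hspan ▸ hXmem j γ))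
              have he2 : toE rb = r j + toE (R j *ᵥ γ) := by
                ext a
                simp [hrb_def]
              rw [he2]
              exact Submodule.add_mem _ hrjK hRgK
            have he3 : s j = toE (X j *ᵥ γ) + β j • toE rb := by
              rw [hsj]
              ext a
              simp
            rw [he3]
            exact Submodule.add_mem _ hXgK (Submodule.smul_mem _ _ hrbK)
          have hle : Submodule.span ℝ (Set.range fun i : Fin (j+1) => s (i:ℕ)) ≤ Kry (j+1) := by
            rw [Submodule.span_le]
            rintro _ ⟨i, rfl⟩
            rcases lt_or_eq_of_le (Nat.lt_succ_iff.mp i.2) with h | h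
            · exact hKmono (Nat.le_succ j)
                (hspan ▸ Submodule.subset_span ⟨⟨(i:ℕ), h⟩, rfl⟩)
            · show s (i:ℕ) ∈ _
              rw [h]
              exact hsjK
          haveI : FiniteDimensional ℝ (E d) := by infer_instance
          refine Submodule.eq_of_le_of_finrank_le hle ?_
          have h1 : Module.finrank ℝ
              (Submodule.span ℝ (Set.range fun i : Fin (j+1) => s (i:ℕ))) = j+1 := by
            rw [finrank_span_eq_card hind', Fintype.card_fin]
          rw [h1, hKry_def]
          have h3 := finrank_span_le_card (R := ℝ)
            (Set.range fun i : Fin (j+1) => mvE (A ^ (i:ℕ)) (r 0))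
          refine h3.trans ?_
          rw [Set.toFinset_range]
          exact (Finset.card_image_le).trans (by simp)

  -- Part 2: modified historical sequences via oblique Gram-Schmidt
  set Phi : E d → E d →ₗ[ℝ] ℝ := fun u =>
    { toFun := fun v => ⟪(if typeII then mvE A u else u), mvE A v⟫_ℝ
      map_add' := by
        intro v w
        show ⟪_, Matrix.toEuclideanLin A (v + w)⟫_ℝ = _
        rw [map_add, inner_add_right]
        rfl
      map_smul' := by
        intro a v
        show ⟪_, Matrix.toEuclideanLin A (a • v)⟫_ℝ = _
        rw [_root_.map_smul, inner_smul_right]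
        rfl } with hPhi_def
  have hPhi_apply : ∀ u v : E d, Phi u v = ⟪(if typeII then mvE A u else u), mvE A v⟫_ℝ :=
    fun u v => rfl
  have hPhi_diag : ∀ v : E d, v ≠ 0 → Phi v v ≠ 0 := by
    intro v hv
    rw [hPhi_apply]
    cases typeII with
    | false =>
        simp only [Bool.false_eq_true, if_false]
        exact ne_of_gt (hpd v hv)
    | true =>
        simp only [if_true]
        have hAv : mvE A v ≠ 0 := by
          intro h
          exact hv (hAinj v (congrArg WithLp.ofLp h))
        rw [ne_eq, inner_self_eq_zero]
        exact hAv

  set p : ℕ → E d := gsP Phi s with hp_def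
  set q : ℕ → E d := fun j => -(mvE A (p j)) with hq_def
  have hsnot : ∀ j, j < k → s j ∉ Submodule.span ℝ (Set.range fun i : Fin j => s (i:ℕ)) := by
    intro j hj
    have h1 := (key (j+1) (by omega)).1
    rw [hsnoc j, linearIndependent_fin_snoc] at h1
    exact h1.2
  have hspan_mono : ∀ (f : ℕ → E d) (m : ℕ),
      Submodule.span ℝ (Set.range fun i : Fin m => f (i:ℕ)) ≤
      Submodule.span ℝ (Set.range fun i : Fin (m+1) => f (i:ℕ)) := by
    intro f m
    apply Submodule.span_mono
    rintro _ ⟨i, rfl⟩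
    exact ⟨Fin.castSucc i, rfl⟩
  have key2 : ∀ j, j ≤ k →
      (∀ a b' : ℕ, 1 ≤ a → a < b' → b' ≤ j → Phi (p a) (p b') = 0) ∧
      (∀ a, 1 ≤ a → a ≤ j → p a ≠ 0) ∧
      (∀ a, 1 ≤ a → a ≤ j → s (a-1) - p a ∈
        Submodule.span ℝ (Set.range fun i : Fin (a-1) => p (1 + (i:ℕ)))) ∧
      Submodule.span ℝ (Set.range fun i : Fin j => p (1 + (i:ℕ))) =
        Submodule.span ℝ (Set.range fun i : Fin j => s (i:ℕ)) := by
    intro j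
    induction j with
    | zero =>
        intro _
        refine ⟨by omega, by omega, by omega, ?_⟩
        simp [Set.range_eq_empty]
    | succ j ih =>
        intro hjk
        obtain ⟨hPO, hPN, hPB, hPS⟩ := ih (by omega)
        have hLeq : gsList Phi s j = (List.range j).map (fun i => p (i+1)) := by
          rw [hp_def]
          exact gsList_eq Phi s j
        have hmemL : ∀ w ∈ gsList Phi s j, ∃ i, i < j ∧ w = p (i+1) := by
          intro w hw
          rw [hLeq] at hw
          obtain ⟨i, hi, rfl⟩ := List.mem_map.mp hw
          exact ⟨i, List.mem_range.mp hi, rfl⟩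
        have hmemL' : ∀ a, 1 ≤ a → a ≤ j → p a ∈ gsList Phi s j := by
          intro a ha haj
          rw [hLeq]
          refine List.mem_map.mpr ⟨a-1, List.mem_range.mpr (by omega), ?_⟩
          have he : a - 1 + 1 = a := by omega
          rw [he]
        have hpw : (gsList Phi s j).Pairwise (fun a b' => Phi a b' = 0) := by
          rw [hLeq, List.pairwise_map]
          refine List.Pairwise.imp_of_mem ?_ List.pairwise_lt_range
          intro a b' ha hb' hab
          have hb'' := List.mem_range.mp hb'
          exact hPO (a+1) (b'+1) (by omega) (by omega) (by omega)
        have hdg : ∀ u ∈ gsList Phi s j, Phi u u ≠ 0 := by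
          intro u hu
          obtain ⟨i, hi, rfl⟩ := hmemL u hu
          exact hPhi_diag _ (hPN (i+1) (by omega) (by omega))
        have hpj1 : p (j+1) = seqGS Phi (gsList Phi s j) (s j) := by
          rw [hp_def]
          rfl
        have horth : ∀ u ∈ gsList Phi s j, Phi u (p (j+1)) = 0 := by
          rw [hpj1]
          exact seqGS_orth Phi _ _ hpw hdg
        have hsub : s j - p (j+1) ∈
            Submodule.span ℝ (Set.range fun i : Fin j => p (1 + (i:ℕ))) := by
          have h1 := seqGS_sub_mem Phi (gsList Phi s j) (s j)
          rw [← hpj1] at h1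
          refine Submodule.span_mono ?_ h1
          intro w hw
          obtain ⟨i, hi, rfl⟩ := hmemL w hw
          exact ⟨⟨i, hi⟩, by rw [Nat.add_comm]⟩
        refine ⟨?_, ?_, ?_, ?_⟩
        · intro a b' ha hab hb'
          rcases eq_or_lt_of_le hb' with h | h
          · rw [h]
            exact horth _ (hmemL' a ha (by omega))
          · exact hPO a b' ha hab (by omega)
        · intro a ha haj
          rcases eq_or_lt_of_le haj with h | h
          · rw [h]
            intro h0p
            have h2 : s j ∈ Submodule.span ℝ (Set.range fun i : Fin j => p (1 + (i:ℕ))) := by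
              have := hsub
              rw [h0p, sub_zero] at this
              exact this
            rw [hPS] at h2
            exact hsnot j (by omega) h2
          · exact hPN a ha (by omega)
        · intro a ha haj
          rcases eq_or_lt_of_le haj with h | h
          · rw [h]
            exact hsub
          · exact hPB a ha (by omega)
        · apply le_antisymm
          · rw [Submodule.span_le]
            rintro _ ⟨i, rfl⟩
            show p (1 + (i:ℕ)) ∈ _
            rcases lt_or_eq_of_le (Nat.lt_succ_iff.mp i.2) with h | h
            · have h1 : p (1 + (i:ℕ)) ∈
                  Submodule.span ℝ (Set.range fun i : Fin j => p (1 + (i:ℕ))) :=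
                Submodule.subset_span ⟨⟨(i:ℕ), h⟩, rfl⟩
              rw [hPS] at h1
              exact hspan_mono s j h1
            · have heq : p (1 + (i:ℕ)) = p (1+j) := by rw [h]
              rw [heq]
              have hpe : p (1+j) = s j - (s j - p (j+1)) := by
                rw [Nat.add_comm]
                abel
              rw [hpe]
              refine Submodule.sub_mem _
                (Submodule.subset_span ⟨⟨j, by omega⟩, rfl⟩) ?_
              have h2 := hsub
              rw [hPS] at h2
              exact hspan_mono s j h2
          · rw [Submodule.span_le]
            rintro _ ⟨i, rfl⟩
            show s (i:ℕ) ∈ _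
            rcases lt_or_eq_of_le (Nat.lt_succ_iff.mp i.2) with h | h
            · have h1 : s (i:ℕ) ∈
                  Submodule.span ℝ (Set.range fun i : Fin j => s (i:ℕ)) :=
                Submodule.subset_span ⟨⟨(i:ℕ), h⟩, rfl⟩
              rw [← hPS] at h1
              exact hspan_mono (fun n => p (1+n)) j h1
            · have heq : s (i:ℕ) = s j := by rw [h]
              rw [heq]
              have hpe : s j = p (j+1) + (s j - p (j+1)) := by abel
              rw [hpe]
              refine Submodule.add_mem _
                (Submodule.subset_span ⟨⟨j, by omega⟩, by
                  show p (1+j) = p (j+1)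
                  rw [Nat.add_comm]⟩) ?_
              exact hspan_mono (fun n => p (1+n)) j hsub

  obtain ⟨hPO, hPN, hPB, hPS⟩ := key2 k le_rfl
  have hzeta : ∀ j : ℕ, ∃ c : Fin (j-1) → ℝ, 2 ≤ j → j ≤ k →
      ∑ i : Fin (j-1), c i • p (1 + (i:ℕ)) = s (j-1) - p j := by
    intro j
    by_cases h : 2 ≤ j ∧ j ≤ k
    · obtain ⟨c, hc⟩ := (Submodule.mem_span_range_iff_exists_fun ℝ).mp (hPB j (by omega) h.2)
      exact ⟨c, fun _ _ => hc⟩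
    · exact ⟨0, fun h1 h2 => absurd ⟨h1, h2⟩ h⟩
  choose cz hcz using hzeta
  set ζ : ℕ → ℕ → ℝ := fun j i => if h : i < j - 1 then cz j ⟨i, h⟩ else 0 with hζ_def
  have hsum : ∀ j : ℕ, ∑ i ∈ Finset.range (j-1), ζ j i • p (1+i)
      = ∑ i : Fin (j-1), cz j i • p (1 + (i:ℕ)) := by
    intro j
    rw [← Fin.sum_univ_eq_sum_range (fun i => ζ j i • p (1+i)) (j-1)]
    refine Finset.sum_congr rfl fun i _ => ?_
    show (if h : (i:ℕ) < j - 1 then cz j ⟨(i:ℕ), h⟩ else 0) • p (1 + (i:ℕ)) = _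
    rw [dif_pos i.2]
  have hsx : ∀ j : ℕ, 1 ≤ j → s (j-1) = x j - x (j-1) := by
    intro j hj
    show x (j-1+1) - x (j-1) = x j - x (j-1)
    have he : j - 1 + 1 = j := by omega
    rw [he]
  have hp_eq : ∀ j, 2 ≤ j → j ≤ k →
      p j = (x j - x (j-1)) - ∑ i ∈ Finset.range (j-1), ζ j i • p (1+i) := by
    intro j h1 h2
    rw [hsum, hcz j h1 h2, ← hsx j (by omega)]
    abel
  have hdr' : ∀ j : ℕ, 1 ≤ j → r j - r (j-1) =
      -(Matrix.toEuclideanLin A (x j - x (j-1))) := by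
    intro j hj
    have h3 := hdr (j-1)
    have he : j - 1 + 1 = j := by omega
    rw [he] at h3
    rw [h3, ← hsx j hj]
    rfl
  have hq_eq : ∀ j, 2 ≤ j → j ≤ k →
      q j = (r j - r (j-1)) - ∑ i ∈ Finset.range (j-1), ζ j i • q (1+i) := by
    intro j h1 h2
    have hqe : ∀ i : ℕ, ζ j i • q (1+i)
        = -(ζ j i • Matrix.toEuclideanLin A (p (1+i))) := by
      intro i
      show ζ j i • -(Matrix.toEuclideanLin A (p (1+i))) = _
      rw [smul_neg]
    show -(Matrix.toEuclideanLin A (p j)) = _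
    rw [hp_eq j h1 h2, map_sub, map_sum, hdr' j (by omega)]
    simp only [_root_.map_smul, hqe, Finset.sum_neg_distrib]
    abel
  refine ⟨fun j h1 h2 => hdet0 j (key j h2).1, p, q, ζ, ⟨rfl, (hdr 0).symm⟩,
    ?_, ?_, ?_, ?_, ?_⟩
  · -- recursions and orthogonality
    intro j h1 h2
    refine ⟨hp_eq j h1 h2, hq_eq j h1 h2, ?_⟩
    intro i hi
    have hφ := hPO (1+i) j (by omega) (by omega) h2
    rw [hPhi_apply] at hφ
    cases typeII with
    | false =>
        simp only [Bool.false_eq_true, if_false] at hφ ⊢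
        show ⟪p (1+i), -(mvE A (p j))⟫_ℝ = 0
        rw [inner_neg_right, hφ, neg_zero]
    | true =>
        simp only [if_true] at hφ ⊢
        show ⟪-(mvE A (p (1+i))), -(mvE A (p j))⟫_ℝ = 0
        rw [inner_neg_neg, hφ]
  · -- diagonal nonzero
    intro j h1 h2
    have hφ := hPhi_diag (p j) (hPN j h1 h2)
    rw [hPhi_apply] at hφ
    cases typeII with
    | false =>
        simp only [Bool.false_eq_true, if_false] at hφ ⊢
        show ⟪p j, -(mvE A (p j))⟫_ℝ ≠ 0
        rw [inner_neg_right, neg_ne_zero]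
        exact hφ
    | true =>
        simp only [if_true] at hφ ⊢
        show ⟪-(mvE A (p j)), -(mvE A (p j))⟫_ℝ ≠ 0
        rw [inner_neg_neg]
        exact hφ
  · -- matrix identity Q = -(A * P)
    ext a i
    show q (1 + (i:ℕ)) a = _
    rw [hq_def]
    show (-(mvE A (p (1 + (i:ℕ))))) a = _
    rw [Matrix.neg_apply, Matrix.mul_apply, PiLp.neg_apply]
    show -((A *ᵥ fromE (p (1 + (i:ℕ)))) a) = _
    congr 1
  · -- span p = span Δx
    have hfam1 : (fun i : Fin k => p ((i:ℕ)+1)) = fun i : Fin k => p (1 + (i:ℕ)) := by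
      funext i
      rw [Nat.add_comm]
    have hfam2 : (fun i : Fin k => x ((i:ℕ)+1) - x (i:ℕ)) = fun i : Fin k => s (i:ℕ) := by
      funext i
      rfl
    rw [hfam1, hfam2]
    exact hPS
  · -- Krylov
    have hfam2 : (fun i : Fin k => x ((i:ℕ)+1) - x (i:ℕ)) = fun i : Fin k => s (i:ℕ) := by
      funext i
      rfl
    rw [hfam2]
    have h5 := (key k le_rfl).2
    rw [hKry_def] at h5
    exact h5



end
end

section
/- Let g(x) = (I−A)x + b in the fixed-point problem x = g(x), where A ∈ ℝ^{d×d} is positive definite (its symmetric part has only positive eigenvalues) and b ∈ ℝ^d. For the restarted Type-I/Type-II AM, if m_{k+1} ≥ 2 at the (k+1)-th iteration and the exact solution has not been reached, then 1 − Γ_k^{(m_k)} ≠ 0 (so the Hessenberg matrix H_k and the scalar h_k^{(m_k+1)} of the Hessenberg construction are well defined), and AP_k = P_{k+1}H̄_k = P_kH_k + p_{k+1}·h_k^{(m_k+1)}e_{m_k}ᵀ, where H̄_k = (H_kᵀ, h_k^{(m_k+1)}e_{m_k})ᵀ ∈ ℝ^{(m_k+1)×m_k} and e_{m_k} is the m_k-th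 standard basis vector of ℝ^{m_k}. -/
open scoped InnerProductSpace
open Finset Matrix

noncomputable section

/-- A run of the (restarted) Anderson-mixing iteration with modified historical
sequences.  `typeII = false` is the Type-I method and `typeII = true` the Type-II
method; `mem k` is the memory size `m_k`; `ζ k`/`Γ k` are the coefficient vectors
(`0`-indexed) used at iteration `k`. -/
structure AMRun (d : ℕ) where
  g : E d → E d
  typeII : Bool
  β : ℕ → ℝ
  mem : ℕ → ℕ
  x : ℕ → E d
  p : ℕ → E d
  q : ℕ → E d
  ζ : ℕ → ℕ → ℝ
  Γ : ℕ → ℕ → ℝ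

namespace AMRun

variable {d : ℕ} (S : AMRun d)

/-- Residual `r_k = g(x_k) - x_k`. -/
def r (k : ℕ) : E d := S.g (S.x k) - S.x k

/-- `v_k = p_k` (Type-I) or `v_k = q_k` (Type-II). -/
def v (k : ℕ) : E d := if S.typeII then S.q k else S.p k

/-- `x̄_k = x_k - P_k Γ_k`. -/
def xbar (k : ℕ) : E d :=
  S.x k - ∑ i ∈ Finset.range (S.mem k), S.Γ k i • S.p (k - S.mem k + 1 + i)

/-- `r̄_k = r_k - Q_k Γ_k`. -/
def rbar (k : ℕ) : E d :=
  S.r k - ∑ i ∈ Finset.range (S.mem k), S.Γ k i • S.q (k - S.mem k + 1 + i)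

/-- The defining relations of the restarted AM method with restart parameters
`m`, `τ`, `η` (conditions (3.5)–(3.7) of the paper are recorded as the invariants
maintained by the restarting checks). -/
structure IsRestarted (m : ℕ) (τ η : ℝ) : Prop where
  mem_zero : S.mem 0 = 0
  mem_succ : ∀ k, S.mem (k + 1) = S.mem k + 1 ∨ S.mem (k + 1) = 0
  mem_le_self : ∀ k, S.mem k ≤ k
  mem_le : ∀ k, S.mem k ≤ m
  res_ctrl : ∀ k, 1 ≤ S.mem k → ‖S.r k‖ ≤ η * ‖S.r (k - S.mem k)‖
  vq_ctrl : ∀ k, 1 ≤ S.mem k →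
    τ * |⟪S.v (k - S.mem k + 1), S.q (k - S.mem k + 1)⟫_ℝ| ≤ |⟪S.v k, S.q k⟫_ℝ|
  pair_one : ∀ k, S.mem k = 1 →
    S.p k = S.x k - S.x (k - 1) ∧ S.q k = S.r k - S.r (k - 1)
  pair_ge_two : ∀ k, 2 ≤ S.mem k →
    S.p k = (S.x k - S.x (k - 1))
        - ∑ i ∈ Finset.range (S.mem k - 1), S.ζ k i • S.p (k - S.mem k + 1 + i) ∧
    S.q k = (S.r k - S.r (k - 1))
        - ∑ i ∈ Finset.range (S.mem k - 1), S.ζ k i • S.q (k - S.mem k + 1 + i) ∧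
    ∀ i < S.mem k - 1, ⟪S.v (k - S.mem k + 1 + i), S.q k⟫_ℝ = 0
  orth : ∀ k, ∀ i < S.mem k, ⟪S.v (k - S.mem k + 1 + i), S.rbar k⟫_ℝ = 0
  update : ∀ k, S.x (k + 1) = S.xbar k + S.β k • S.rbar k

end AMRun

/-- Data of Process II: the same AM scheme applied to the linearized system
`ĥ(x) = h'(x*) (x - x*) = 0`, restarted together with Process I. -/
structure LinRun (d : ℕ) where
  xh : ℕ → E d
  ph : ℕ → E d
  qh : ℕ → E d
  ζh : ℕ → ℕ → ℝ
  Γh : ℕ → ℕ → ℝ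

namespace LinRun

variable {d : ℕ}

/-- Residual of the linearized process: `r̂_k = -A (x̂_k - x*)`. -/
def rh (T : LinRun d) (A : E d →L[ℝ] E d) (xs : E d) (k : ℕ) : E d := -A (T.xh k - xs)

def vh (T : LinRun d) (S : AMRun d) (k : ℕ) : E d := if S.typeII then T.qh k else T.ph k

def xbarh (T : LinRun d) (S : AMRun d) (k : ℕ) : E d :=
  T.xh k - ∑ i ∈ Finset.range (S.mem k), T.Γh k i • T.ph (k - S.mem k + 1 + i)

def rbarh (T : LinRun d) (S : AMRun d) (A : E d →L[ℝ] E d) (xs : E d) (k : ℕ) : E d :=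
  T.rh A xs k - ∑ i ∈ Finset.range (S.mem k), T.Γh k i • T.qh (k - S.mem k + 1 + i)

/-- The defining relations of Process II (Definition 4.3 of the paper). -/
structure IsLinearized (T : LinRun d) (S : AMRun d) (A : E d →L[ℝ] E d) (xs : E d) : Prop where
  reinit : ∀ k, S.mem k = 0 → T.xh k = S.x k
  pair_one : ∀ k, S.mem k = 1 →
    T.ph k = T.xh k - T.xh (k - 1) ∧ T.qh k = T.rh A xs k - T.rh A xs (k - 1)
  pair_ge_two : ∀ k, 2 ≤ S.mem k →
    T.ph k = (T.xh k - T.xh (k - 1))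
        - ∑ i ∈ Finset.range (S.mem k - 1), T.ζh k i • T.ph (k - S.mem k + 1 + i) ∧
    T.qh k = (T.rh A xs k - T.rh A xs (k - 1))
        - ∑ i ∈ Finset.range (S.mem k - 1), T.ζh k i • T.qh (k - S.mem k + 1 + i) ∧
    ∀ i < S.mem k - 1, ⟪T.vh S (k - S.mem k + 1 + i), T.qh k⟫_ℝ = 0
  orth : ∀ k, ∀ i < S.mem k, ⟪T.vh S (k - S.mem k + 1 + i), T.rbarh S A xs k⟫_ℝ = 0
  update : ∀ k, T.xh (k + 1) = T.xbarh S k + S.β k • T.rbarh S A xs k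

end LinRun

/-- Assumption H of the paper, together with the quantitative constants
`ρ̂ = ρ`, `κ̂ = κh`, `μ`, `L` appearing in (4.4)–(4.6). -/
structure AssumptionH (d : ℕ) (g : E d → E d) (xs : E d)
    (Dh : E d → (E d →L[ℝ] E d)) (ρ κh μ L : ℝ) : Prop where
  ρ_pos : 0 < ρ
  κ_pos : 0 < κh
  μ_pos : 0 < μ
  L_pos : 0 < L
  fixed : g xs = xs
  deriv : ∀ x ∈ Metric.closedBall xs ρ, HasFDerivAt (fun y => y - g y) (Dh x) x
  norm_lower : ∀ x ∈ Metric.closedBall xs ρ, ∀ y : E d, μ * ‖y‖ ≤ ‖Dh x y‖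
  norm_upper : ∀ x ∈ Metric.closedBall xs ρ, ∀ y : E d, ‖Dh x y‖ ≤ L * ‖y‖
  inner_lower : ∀ x ∈ Metric.closedBall xs ρ, ∀ y : E d, μ * ‖y‖ ^ 2 ≤ ⟪y, Dh x y⟫_ℝ
  inner_upper : ∀ x ∈ Metric.closedBall xs ρ, ∀ y : E d, ⟪y, Dh x y⟫_ℝ ≤ L * ‖y‖ ^ 2
  taylor : ∀ x ∈ Metric.closedBall xs ρ,
    ‖(x - g x) - Dh xs (x - xs)‖ ≤ κh / 2 * ‖x - xs‖ ^ 2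


/-- The entries of the (unreduced) upper-Hessenberg matrix of Definition 5.1,
built column by column from the AM coefficients along a window starting at the
restart index `k0`.  Column `j` (`j < n`) corresponds to iteration
`t = k0 + 1 + j`, where the memory size is `m_t = j + 1`; `Hs i j` is the
`(i, j)` entry (`0`-indexed).  The equations below transcribe
`h_t^{(m_t+1)} = -1/(β_t (1 - Γ_t^{(m_t)}))`, the `m_t = 1` formula
`h_t = (1/(1-Γ_t))(1/β_{t-1} - φ_t/β_t)` and the `m_t ≥ 2` formula
`h_t = (1/(1-Γ_t^{(m_t)}))((1/β_{t-1})(φ_{t-1}ᵀ,1)ᵀ - (1/β_t)φ_t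
        - H̄_{t-1}(φ_{t-1} - Γ_t^{[m_t-1]}))`, with `φ_t = Γ_t + ζ_{t+1}`. -/
def IsHess (β : ℕ → ℝ) (ζ Γ : ℕ → ℕ → ℝ) (k0 n : ℕ) (Hs : ℕ → ℕ → ℝ) : Prop :=
  ∀ j < n,
    (∀ i, j + 1 < i → Hs i j = 0) ∧
    Hs (j + 1) j = -(1 / (β (k0 + 1 + j) * (1 - Γ (k0 + 1 + j) j))) ∧
    (j = 0 → Hs 0 0 = (1 / (1 - Γ (k0 + 1) 0)) *
        (1 / β k0 - (Γ (k0 + 1) 0 + ζ (k0 + 2) 0) / β (k0 + 1))) ∧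
    (1 ≤ j → ∀ i ≤ j, Hs i j = (1 / (1 - Γ (k0 + 1 + j) j)) *
        ((1 / β (k0 + j)) * (if i < j then Γ (k0 + j) i + ζ (k0 + j + 1) i else 1)
          - (Γ (k0 + 1 + j) i + ζ (k0 + 2 + j) i) / β (k0 + 1 + j)
          - ∑ l ∈ Finset.range j,
              Hs i l * ((Γ (k0 + j) l + ζ (k0 + j + 1) l) - Γ (k0 + 1 + j) l)))

/-- Proposition 5.2 of the paper.  For the restarted
Type-I/Type-II AM applied to the linear fixed-point problem `g(x) = (I-A)x + b`
with `A` positive definite, if `m_{k+1} ≥ 2` at iteration `k+1` and the exact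
solution has not been reached, then `1 - Γ_k^{(m_k)} ≠ 0` (so the Hessenberg
construction of Definition 5.1 is well defined), and
`A P_k = P_{k+1} H̄_k = P_k H_k + p_{k+1} · h_k^{(m_k+1)} e_{m_k}ᵀ`
(stated column by column). -/
theorem stmt_9 {d : ℕ} (A : Matrix (Fin d) (Fin d) ℝ) (b : E d)
    (hpd : ∀ y : E d, y ≠ 0 → 0 < ⟪y, mvE A y⟫_ℝ)
    (m : ℕ) (hm : 1 ≤ m) (τ η : ℝ) (hτ0 : 0 < τ) (hτ1 : τ < 1) (hη : 0 < η)
    (S : AMRun d) (hg : S.g = fun u => u - mvE A u + b)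
    (hβpos : ∀ j, 0 < S.β j)
    (hrun : S.IsRestarted m τ η)
    (k : ℕ) (hmem : 2 ≤ S.mem (k + 1))
    (hne : ∀ j ≤ k + 1, S.r j ≠ 0) :
    1 - S.Γ k (S.mem k - 1) ≠ 0 ∧
    ∀ Hs : ℕ → ℕ → ℝ, IsHess S.β S.ζ S.Γ (k - S.mem k) (S.mem k) Hs →
      (∀ j < S.mem k,
        mvE A (S.p (k - S.mem k + 1 + j)) =
          ∑ i ∈ Finset.range (S.mem k + 1), Hs i j • S.p (k - S.mem k + 1 + i)) ∧
      (∀ j < S.mem k,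
        mvE A (S.p (k - S.mem k + 1 + j)) =
          (∑ i ∈ Finset.range (S.mem k), Hs i j • S.p (k - S.mem k + 1 + i)) +
            (if j + 1 = S.mem k then Hs (S.mem k) j else 0) • S.p (k + 1)) := by
  classical
  have hmv : ∀ u : E d, mvE A u = Matrix.toEuclideanLin A u := fun _ => rfl
  set L : E d →ₗ[ℝ] E d := Matrix.toEuclideanLin A with hLdef
  set M := S.mem k with hMdef
  set k0 := k - M with hk0def
  have hMk : M ≤ k := hrun.mem_le_self k
  have hsucc : S.mem (k + 1) = M + 1 := by
    rcases hrun.mem_succ k with h | h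
    · rw [h]
    · omega
  have hM1 : 1 ≤ M := by omega
  have hk0 : k0 + M = k := by omega
  -- memory sizes along the window
  have hwin : ∀ s, s ≤ M + 1 → S.mem (k0 + s) = s := by
    have key : ∀ j, j ≤ M + 1 → S.mem (k + 1 - j) = M + 1 - j := by
      intro j
      induction j with
      | zero => intro _; simpa using hsucc
      | succ n ih =>
        intro hn
        have h1 := ih (by omega)
        have h2 : k + 1 - n = (k + 1 - (n + 1)) + 1 := by omega
        rw [h2] at h1
        rcases hrun.mem_succ (k + 1 - (n + 1)) with h | h <;> omega
    intro s hs
    have h := key (M + 1 - s) (by omega)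
    have e : k + 1 - (M + 1 - s) = k0 + s := by omega
    rw [e] at h
    omega
  have hwin' : ∀ u, u ≤ M → S.mem (k0 + 1 + u) = u + 1 := by
    intro u hu
    have := hwin (u + 1) (by omega)
    rwa [show k0 + (u + 1) = k0 + 1 + u by omega] at this
  -- residual is affine
  have hr : ∀ u, S.r u = b - L (S.x u) := by
    intro u
    show S.g (S.x u) - S.x u = _
    rw [hg]
    simp only [hmv]
    abel
  -- rbar, xbar in window form
  have hrbar_eq : ∀ s, s ≤ M + 1 → S.rbar (k0 + s) =
      S.r (k0 + s) - ∑ i ∈ Finset.range s, S.Γ (k0 + s) i • S.q (k0 + 1 + i) := by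
    intro s hs
    show S.r (k0+s) - ∑ i ∈ Finset.range (S.mem (k0+s)), S.Γ (k0+s) i • S.q (k0 + s - S.mem (k0+s) + 1 + i) = _
    rw [hwin s hs, show k0 + s - s + 1 = k0 + 1 by omega]
  have hxbar_eq : ∀ s, s ≤ M + 1 → S.xbar (k0 + s) =
      S.x (k0 + s) - ∑ i ∈ Finset.range s, S.Γ (k0 + s) i • S.p (k0 + 1 + i) := by
    intro s hs
    show S.x (k0+s) - ∑ i ∈ Finset.range (S.mem (k0+s)), S.Γ (k0+s) i • S.p (k0 + s - S.mem (k0+s) + 1 + i) = _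
    rw [hwin s hs, show k0 + s - s + 1 = k0 + 1 by omega]
  -- orthogonality in window form
  have horth : ∀ s, s ≤ M → ∀ i, i < s → ⟪S.v (k0 + 1 + i), S.rbar (k0 + s)⟫_ℝ = 0 := by
    intro s hs i hi
    have h := hrun.orth (k0 + s) i (by rw [hwin s (by omega)]; exact hi)
    rwa [show k0 + s - S.mem (k0 + s) + 1 + i = k0 + 1 + i by rw [hwin s (by omega)]; omega] at h
  -- triangular orthogonality of q against earlier v
  have hqorth : ∀ u, u ≤ M → ∀ i, i < u → ⟪S.v (k0 + 1 + i), S.q (k0 + 1 + u)⟫_ℝ = 0 := by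
    intro u hu i hi
    have h2 : 2 ≤ S.mem (k0 + 1 + u) := by rw [hwin' u hu]; omega
    have h := (hrun.pair_ge_two (k0 + 1 + u) h2).2.2 i (by rw [hwin' u hu]; omega)
    rwa [show k0 + 1 + u - S.mem (k0 + 1 + u) + 1 + i = k0 + 1 + i by rw [hwin' u hu]; omega] at h
  -- q = -A p along the window
  have hq : ∀ u, u ≤ M → S.q (k0 + 1 + u) = - L (S.p (k0 + 1 + u)) := by
    intro u
    induction u using Nat.strong_induction_on with
    | _ u ih =>
      intro hu
      rcases Nat.eq_zero_or_pos u with h0 | h1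
      · subst h0
        have h := hrun.pair_one (k0 + 1 + 0) (by simpa using hwin' 0 (by omega))
        rw [show k0 + 1 + 0 - 1 = k0 by omega] at h
        rw [h.1, h.2, hr, hr, map_sub]
        abel
      · have h2 : 2 ≤ S.mem (k0 + 1 + u) := by rw [hwin' u hu]; omega
        obtain ⟨hp2, hq2, -⟩ := hrun.pair_ge_two (k0 + 1 + u) h2
        rw [hwin' u hu] at hp2 hq2
        rw [show k0 + 1 + u - (u + 1) + 1 = k0 + 1 by omega] at hp2 hq2
        rw [show u + 1 - 1 = u by omega] at hp2 hq2
        rw [show k0 + 1 + u - 1 = k0 + u by omega] at hp2 hq2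
        have hsc : ∑ i ∈ Finset.range u, S.ζ (k0+1+u) i • S.q (k0+1+i)
            = ∑ i ∈ Finset.range u, S.ζ (k0+1+u) i • (- L (S.p (k0+1+i))) :=
          Finset.sum_congr rfl fun i hi => by
            rw [ih i (Finset.mem_range.mp hi) (by have := Finset.mem_range.mp hi; omega)]
        rw [hq2, hp2, map_sub, map_sub, map_sum, hr, hr, hsc]
        simp only [LinearMap.map_smul, smul_neg, Finset.sum_neg_distrib]
        abel
  -- rbar = b - A xbar
  have hrb : ∀ s, s ≤ M → S.rbar (k0 + s) = b - L (S.xbar (k0 + s)) := by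
    intro s hs
    have hsc : ∑ i ∈ Finset.range s, S.Γ (k0+s) i • S.q (k0+1+i)
        = ∑ i ∈ Finset.range s, S.Γ (k0+s) i • (- L (S.p (k0+1+i))) :=
      Finset.sum_congr rfl fun i hi => by
        rw [hq i (by have := Finset.mem_range.mp hi; omega)]
    rw [hrbar_eq s (by omega), hxbar_eq s (by omega), hr, map_sub, map_sum, hsc]
    simp only [LinearMap.map_smul, smul_neg, Finset.sum_neg_distrib]
    abel
  -- β A rbar = rbar - r_{next}
  have hAr : ∀ s, s ≤ M → S.β (k0 + s) • L (S.rbar (k0 + s)) = S.rbar (k0 + s) - S.r (k0 + 1 + s) := by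
    intro s hs
    have hu := hrun.update (k0 + s)
    rw [show k0 + s + 1 = k0 + 1 + s by omega] at hu
    rw [show S.r (k0 + 1 + s) = b - L (S.x (k0 + 1 + s)) from hr _, hu, map_add, LinearMap.map_smul]
    rw [show S.rbar (k0 + s) = b - L (S.xbar (k0 + s)) from hrb s hs]
    abel
  -- the p recursion
  have hp : ∀ u, u ≤ M → S.p (k0 + 1 + u) = S.β (k0 + u) • S.rbar (k0 + u)
      - ∑ i ∈ Finset.range u, (S.Γ (k0 + u) i + S.ζ (k0 + 1 + u) i) • S.p (k0 + 1 + i) := by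
    intro u hu
    have hupd := hrun.update (k0 + u)
    rw [show k0 + u + 1 = k0 + 1 + u by omega] at hupd
    rw [hxbar_eq u (by omega)] at hupd
    rcases Nat.eq_zero_or_pos u with h0 | h1
    · subst h0
      have h := (hrun.pair_one (k0 + 1 + 0) (by simpa using hwin' 0 (by omega))).1
      rw [show k0 + 1 + 0 - 1 = k0 + 0 by omega] at h
      rw [h, hupd]
      simp
    · have h2 : 2 ≤ S.mem (k0 + 1 + u) := by rw [hwin' u hu]; omega
      have h := (hrun.pair_ge_two (k0 + 1 + u) h2).1
      rw [hwin' u hu] at h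
      rw [show k0 + 1 + u - (u + 1) + 1 = k0 + 1 by omega] at h
      rw [show u + 1 - 1 = u by omega] at h
      rw [show k0 + 1 + u - 1 = k0 + u by omega] at h
      rw [h, hupd]
      rw [Finset.sum_congr rfl (fun i _ => add_smul (S.Γ (k0+u) i) (S.ζ (k0+1+u) i) (S.p (k0+1+i))),
        Finset.sum_add_distrib]
      abel
  -- the q/r recursion
  have hqr : ∀ u, u ≤ M → S.r (k0 + 1 + u) = S.rbar (k0 + u) + S.q (k0 + 1 + u)
      + ∑ i ∈ Finset.range u, (S.Γ (k0 + u) i + S.ζ (k0 + 1 + u) i) • S.q (k0 + 1 + i) := by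
    intro u hu
    have h1 : S.q (k0 + 1 + u) = - (S.β (k0+u) • L (S.rbar (k0+u)))
        + ∑ i ∈ Finset.range u, (S.Γ (k0 + u) i + S.ζ (k0 + 1 + u) i) • L (S.p (k0 + 1 + i)) := by
      rw [hq u hu, hp u hu, map_sub, LinearMap.map_smul, map_sum]
      simp only [LinearMap.map_smul]
      abel
    have hsc : ∑ i ∈ Finset.range u, (S.Γ (k0+u) i + S.ζ (k0+1+u) i) • S.q (k0+1+i)
        = ∑ i ∈ Finset.range u, (S.Γ (k0+u) i + S.ζ (k0+1+u) i) • (- L (S.p (k0+1+i))) :=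
      Finset.sum_congr rfl fun i hi => by
        rw [hq i (by have := Finset.mem_range.mp hi; omega)]
    rw [hsc, h1, hAr u hu]
    simp only [smul_neg, Finset.sum_neg_distrib]
    abel
  -- decomposition of rbar
  have hrdec : ∀ u, u < M → S.rbar (k0 + 1 + u) = S.rbar (k0 + u)
      + (1 - S.Γ (k0 + 1 + u) u) • S.q (k0 + 1 + u)
      + ∑ i ∈ Finset.range u,
          ((S.Γ (k0 + u) i + S.ζ (k0 + 1 + u) i) - S.Γ (k0 + 1 + u) i) • S.q (k0 + 1 + i) := by
    intro u hu
    have h1 := hrbar_eq (u + 1) (by omega)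
    rw [show k0 + (u + 1) = k0 + 1 + u by omega] at h1
    rw [h1, hqr u (by omega), Finset.sum_range_succ]
    rw [Finset.sum_congr rfl (fun i _ => sub_smul ((S.Γ (k0+u) i + S.ζ (k0+1+u) i)) (S.Γ (k0+1+u) i) (S.q (k0+1+i))),
      Finset.sum_sub_distrib]
    rw [sub_smul, one_smul]
    abel
  -- rbar is nonzero in the window
  have hrbne : ∀ s, s ≤ M → S.rbar (k0 + s) ≠ 0 := by
    intro s hs h0
    have h := hAr s hs
    rw [h0] at h
    simp only [map_zero, smul_zero, zero_sub] at h
    exact hne (k0 + 1 + s) (by omega) (by rw [← neg_eq_zero, h])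
  -- the key nondegeneracy induction
  have hkey : ∀ u, u < M →
      (⟪S.v (k0 + 1 + u), S.q (k0 + 1 + u)⟫_ℝ ≠ 0 ∧ 1 - S.Γ (k0 + 1 + u) u ≠ 0 ∧
        ∀ i, i < u → S.Γ (k0 + u) i + S.ζ (k0 + 1 + u) i = S.Γ (k0 + 1 + u) i) := by
    intro u
    induction u using Nat.strong_induction_on with
    | _ u ih =>
      intro hu
      have hrne : S.rbar (k0 + u) ≠ 0 := hrbne u (by omega)
      have hvr : ⟪S.v (k0 + 1 + u), S.rbar (k0 + u)⟫_ℝ ≠ 0 := by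
        cases hT : S.typeII
        · -- Type-I, v = p
          have hv : S.v (k0 + 1 + u) = S.p (k0 + 1 + u) := by simp [AMRun.v, hT]
          rw [hv, hp u (by omega), inner_sub_left, real_inner_smul_left, sum_inner]
          have hz : ∑ i ∈ Finset.range u,
              ⟪(S.Γ (k0+u) i + S.ζ (k0+1+u) i) • S.p (k0+1+i), S.rbar (k0+u)⟫_ℝ = 0 := by
            refine Finset.sum_eq_zero fun i hi => ?_
            rw [real_inner_smul_left]
            have h0 := horth u (by omega) i (Finset.mem_range.mp hi)
            rw [show S.v (k0+1+i) = S.p (k0+1+i) from by simp [AMRun.v, hT]] at h0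
            rw [h0, mul_zero]
          rw [hz, sub_zero]
          exact ne_of_gt (mul_pos (hβpos _)
            (by rw [real_inner_self_eq_norm_sq]; exact pow_pos (norm_pos_iff.mpr hrne) 2))
        · -- Type-II, v = q
          have hv : S.v (k0 + 1 + u) = S.q (k0 + 1 + u) := by simp [AMRun.v, hT]
          have hqe : S.q (k0+1+u) = - (S.β (k0+u) • L (S.rbar (k0+u)))
              - ∑ i ∈ Finset.range u, (S.Γ (k0+u) i + S.ζ (k0+1+u) i) • S.q (k0+1+i) := by
            have h1 := hqr u (by omega)
            have h2 := hAr u (by omega)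
            have h3 : S.q (k0+1+u) = (S.r (k0+1+u) - S.rbar (k0+u))
                - ∑ i ∈ Finset.range u, (S.Γ (k0+u) i + S.ζ (k0+1+u) i) • S.q (k0+1+i) := by
              rw [h1]; abel
            rw [h3, show S.r (k0+1+u) - S.rbar (k0+u)
              = -(S.β (k0+u) • L (S.rbar (k0+u))) from by rw [h2]; abel]
          rw [hv, hqe, inner_sub_left, inner_neg_left, real_inner_smul_left, sum_inner]
          have hz : ∑ i ∈ Finset.range u,
              ⟪(S.Γ (k0+u) i + S.ζ (k0+1+u) i) • S.q (k0+1+i), S.rbar (k0+u)⟫_ℝ = 0 := by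
            refine Finset.sum_eq_zero fun i hi => ?_
            rw [real_inner_smul_left]
            have h0 := horth u (by omega) i (Finset.mem_range.mp hi)
            rw [show S.v (k0+1+i) = S.q (k0+1+i) from by simp [AMRun.v, hT]] at h0
            rw [h0, mul_zero]
          rw [hz, sub_zero]
          have hpos : 0 < ⟪L (S.rbar (k0+u)), S.rbar (k0+u)⟫_ℝ := by
            rw [real_inner_comm, ← hmv]
            exact hpd _ hrne
          exact neg_ne_zero.mpr (ne_of_gt (mul_pos (hβpos _) hpos))
      have hc0 : ∀ i, i < u → S.Γ (k0+u) i + S.ζ (k0+1+u) i = S.Γ (k0+1+u) i := by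
        intro i
        induction i using Nat.strong_induction_on with
        | _ i ih2 =>
          intro hiu
          have h0 := horth (u+1) (by omega) i (by omega)
          rw [show k0 + (u+1) = k0 + 1 + u by omega] at h0
          rw [hrdec u hu, inner_add_right, inner_add_right, real_inner_smul_right, inner_sum] at h0
          simp only [real_inner_smul_right] at h0
          rw [horth u (by omega) i hiu, hqorth u (by omega) i hiu, mul_zero, add_zero, zero_add] at h0
          rw [Finset.sum_eq_single_of_mem i (Finset.mem_range.mpr hiu) (fun l hl hlne => by
            rcases Nat.lt_or_ge l i with hli | hli
            · rw [ih2 l hli (by have := Finset.mem_range.mp hl; omega), sub_self, zero_mul]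
            · have hil : i < l := by omega
              rw [hqorth l (by have := Finset.mem_range.mp hl; omega) i hil, mul_zero])] at h0
          have hne0 : ⟪S.v (k0+1+i), S.q (k0+1+i)⟫_ℝ ≠ 0 := (ih i (by omega) (by omega)).1
          have : S.Γ (k0+u) i + S.ζ (k0+1+u) i - S.Γ (k0+1+u) i = 0 := by
            rcases mul_eq_zero.mp h0 with h | h
            · exact h
            · exact absurd h hne0
          linarith
      have h0 := horth (u+1) (by omega) u (by omega)
      rw [show k0 + (u+1) = k0 + 1 + u by omega] at h0
      rw [hrdec u hu, inner_add_right, inner_add_right, real_inner_smul_right, inner_sum] at h0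
      have hz : ∑ i ∈ Finset.range u, ⟪S.v (k0+1+u),
          ((S.Γ (k0+u) i + S.ζ (k0+1+u) i) - S.Γ (k0+1+u) i) • S.q (k0+1+i)⟫_ℝ = 0 := by
        refine Finset.sum_eq_zero fun i hi => ?_
        rw [hc0 i (Finset.mem_range.mp hi), sub_self, zero_smul, inner_zero_right]
      rw [hz, add_zero] at h0
      have hprod : (1 - S.Γ (k0+1+u) u) * ⟪S.v (k0+1+u), S.q (k0+1+u)⟫_ℝ ≠ 0 := by
        intro h
        exact hvr (by linarith)
      obtain ⟨h1, h2⟩ := mul_ne_zero_iff.mp hprod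
      exact ⟨h2, h1, hc0⟩
  constructor
  · have h := (hkey (M - 1) (by omega)).2.1
    rwa [show k0 + 1 + (M - 1) = k by omega] at h
  · intro Hs hHs
    -- the key vector identity (★)
    have hstar : ∀ j, j < M → (1 - S.Γ (k0+1+j) j) • L (S.p (k0+1+j))
        = S.rbar (k0+j) - S.rbar (k0+1+j) := by
      intro j hj
      have h2 : S.r (k0+1+j) = S.rbar (k0+1+j)
          + ∑ i ∈ Finset.range (j+1), S.Γ (k0+1+j) i • S.q (k0+1+i) := by
        have h := hrbar_eq (j+1) (by omega)
        rw [show k0 + (j+1) = k0+1+j by omega] at h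
        rw [h]; abel
      have h4 : L (S.p (k0+1+j)) = (S.rbar (k0+j) - S.r (k0+1+j))
          - ∑ i ∈ Finset.range j, (S.Γ (k0+j) i + S.ζ (k0+1+j) i) • L (S.p (k0+1+i)) := by
        rw [hp j (le_of_lt hj), map_sub, LinearMap.map_smul, map_sum, hAr j (le_of_lt hj)]
        simp only [LinearMap.map_smul]
      have h5 : ∑ i ∈ Finset.range j, (S.Γ (k0+j) i + S.ζ (k0+1+j) i) • L (S.p (k0+1+i))
          = - ∑ i ∈ Finset.range j, S.Γ (k0+1+j) i • S.q (k0+1+i) := by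
        rw [← Finset.sum_neg_distrib]
        refine Finset.sum_congr rfl fun i hi => ?_
        rw [(hkey j hj).2.2 i (Finset.mem_range.mp hi),
          hq i (by have := Finset.mem_range.mp hi; omega)]
        simp
      have h6 : ∑ i ∈ Finset.range (j+1), S.Γ (k0+1+j) i • S.q (k0+1+i)
          = (∑ i ∈ Finset.range j, S.Γ (k0+1+j) i • S.q (k0+1+i))
            - S.Γ (k0+1+j) j • L (S.p (k0+1+j)) := by
        rw [Finset.sum_range_succ, hq j (le_of_lt hj)]
        rw [smul_neg]
        abel
      rw [h5, h2, h6] at h4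
      linear_combination (norm := module) h4
    have hmain : ∀ j, j < M →
        L (S.p (k0+1+j)) = ∑ i ∈ Finset.range (M+1), Hs i j • S.p (k0+1+i) := by
      intro j hj
      obtain ⟨hz0, hsubd, hj0, hjge⟩ := hHs j hj
      have hcne : (1 - S.Γ (k0+1+j) j) ≠ 0 := (hkey j hj).2.1
      set c := (1 - S.Γ (k0+1+j) j)⁻¹ with hcdef
      have hcoef : ∀ i, i ≤ j → Hs i j = c *
          ((S.β (k0+j))⁻¹ * (if i < j then S.Γ (k0+j) i + S.ζ (k0+1+j) i else 1)
            - (S.β (k0+1+j))⁻¹ * (S.Γ (k0+1+j) i + S.ζ (k0+1+(j+1)) i)) := by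
        intro i hi
        rcases Nat.eq_zero_or_pos j with rfl | hj1
        · interval_cases i
          rw [hj0 rfl]
          rw [show k0+1+(0+1) = k0 + 2 by omega, show k0+0 = k0 by omega, hcdef]
          rw [if_neg (lt_irrefl 0)]
          ring
        · have h := hjge hj1 i hi
          rw [show k0+j+1 = k0+1+j by omega, show k0+2+j = k0+1+(j+1) by omega] at h
          have hz : ∑ l ∈ Finset.range j,
              Hs i l * ((S.Γ (k0+j) l + S.ζ (k0+1+j) l) - S.Γ (k0+1+j) l) = 0 := by
            refine Finset.sum_eq_zero fun l hl => ?_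
            rw [(hkey j hj).2.2 l (Finset.mem_range.mp hl), sub_self, mul_zero]
          rw [hz] at h
          rw [h, hcdef]
          ring
      have hsubc : Hs (j+1) j = c * (-(S.β (k0+1+j))⁻¹) := by
        rw [hsubd, hcdef]
        rw [one_div, mul_inv]
        ring
      have hb0 : S.β (k0+j) ≠ 0 := (hβpos _).ne'
      have hb1 : S.β (k0+1+j) ≠ 0 := (hβpos _).ne'
      have hrb1 : S.rbar (k0+j) = (S.β (k0+j))⁻¹ • (S.p (k0+1+j)
          + ∑ i ∈ Finset.range j, (S.Γ (k0+j) i + S.ζ (k0+1+j) i) • S.p (k0+1+i)) := by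
        have h := hp j (le_of_lt hj)
        have h' : S.β (k0+j) • S.rbar (k0+j) = S.p (k0+1+j)
            + ∑ i ∈ Finset.range j, (S.Γ (k0+j) i + S.ζ (k0+1+j) i) • S.p (k0+1+i) := by
          rw [h]; abel
        rw [← h', inv_smul_smul₀ hb0]
      have hrb2 : S.rbar (k0+1+j) = (S.β (k0+1+j))⁻¹ • (S.p (k0+1+(j+1))
          + ∑ i ∈ Finset.range (j+1),
              (S.Γ (k0+1+j) i + S.ζ (k0+1+(j+1)) i) • S.p (k0+1+i)) := by
        have h := hp (j+1) hj
        rw [show k0+(j+1) = k0+1+j by omega] at h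
        have h' : S.β (k0+1+j) • S.rbar (k0+1+j) = S.p (k0+1+(j+1))
            + ∑ i ∈ Finset.range (j+1),
                (S.Γ (k0+1+j) i + S.ζ (k0+1+(j+1)) i) • S.p (k0+1+i) := by
          rw [h]; abel
        rw [← h', inv_smul_smul₀ hb1]
      have hLp : L (S.p (k0+1+j)) = c • (S.rbar (k0+j) - S.rbar (k0+1+j)) := by
        rw [← hstar j hj, hcdef, inv_smul_smul₀ hcne]
      have hred : ∑ i ∈ Finset.range (M+1), Hs i j • S.p (k0+1+i)
          = ∑ i ∈ Finset.range (j+2), Hs i j • S.p (k0+1+i) := by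
        symm
        apply Finset.sum_subset (Finset.range_subset_range.mpr (by omega))
        intro i hi1 hi2
        rw [hz0 i (by simp only [Finset.mem_range] at hi1 hi2 ⊢; omega), zero_smul]
      have hsc2 : ∑ i ∈ Finset.range j, Hs i j • S.p (k0+1+i)
          = ∑ i ∈ Finset.range j, (c *
            ((S.β (k0+j))⁻¹ * (S.Γ (k0+j) i + S.ζ (k0+1+j) i)
              - (S.β (k0+1+j))⁻¹ * (S.Γ (k0+1+j) i + S.ζ (k0+1+(j+1)) i))) • S.p (k0+1+i) :=
        Finset.sum_congr rfl fun i hi => by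
          rw [hcoef i (le_of_lt (Finset.mem_range.mp hi)), if_pos (Finset.mem_range.mp hi)]
      have hsplit : ∑ i ∈ Finset.range j, (c *
            ((S.β (k0+j))⁻¹ * (S.Γ (k0+j) i + S.ζ (k0+1+j) i)
              - (S.β (k0+1+j))⁻¹ * (S.Γ (k0+1+j) i + S.ζ (k0+1+(j+1)) i))) • S.p (k0+1+i)
          = c • ((S.β (k0+j))⁻¹ •
                ∑ i ∈ Finset.range j, (S.Γ (k0+j) i + S.ζ (k0+1+j) i) • S.p (k0+1+i)
              - (S.β (k0+1+j))⁻¹ •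
                ∑ i ∈ Finset.range j, (S.Γ (k0+1+j) i + S.ζ (k0+1+(j+1)) i) • S.p (k0+1+i)) := by
        rw [smul_sub, smul_smul, smul_smul, Finset.smul_sum, Finset.smul_sum,
          ← Finset.sum_sub_distrib]
        refine Finset.sum_congr rfl fun i hi => ?_
        module
      rw [hred, Finset.sum_range_succ, Finset.sum_range_succ, hsubc,
        hcoef j le_rfl, if_neg (lt_irrefl j), hsc2, hsplit, hLp, hrb1, hrb2,
        Finset.sum_range_succ]
      module
    refine ⟨fun j hj => by rw [hmv]; exact hmain j hj, fun j hj => ?_⟩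
    rw [hmv, hmain j hj, Finset.sum_range_succ]
    congr 1
    rw [show k0+1+M = k+1 by omega]
    by_cases h : j + 1 = M
    · rw [if_pos h]
    · rw [if_neg h, (hHs j hj).1 M (by omega)]


end
end

section
/- Let g(x) = (I−A)x + b in the fixed-point problem x = g(x), where A ∈ ℝ^{d×d} is symmetric positive definite and b ∈ ℝ^d. For the full-memory Type-I/Type-II AM with modified historical sequences, if the algorithm has not found the exact solution, then the coefficient vectors satisfy ζ_k^{(j)} = 0 for all j ≤ k−3 (when k ≥ 4) and Γ_k^{(j)} = 0 for all j ≤ k−2 (when k ≥ 3); that is, the method reduces to a short-term recurrence involving only the two most recent vector pairs. -/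
open scoped InnerProductSpace
open Finset Matrix

noncomputable section

/-- Proposition 6.1 of the paper.  For the linear fixed-point
problem `g(x) = (I-A)x + b` with `A` symmetric positive definite, the
full-memory Type-I/Type-II AM with modified historical sequences
(`m_k = k`; residual `r_j = b - A x_j`; `p_1 = Δx_0`, `q_1 = Δr_0`;
`p_k = Δx_{k-1} - P_{k-1} ζ_k`, `q_k = Δr_{k-1} - Q_{k-1} ζ_k` with
`q_k ⊥ range(V_{k-1})`; `x_{k+1} = x̄_k + β_k r̄_k` with `r̄_k = r_k - Q_k Γ_k ⊥
range(V_k)`) satisfies, as long as the exact solution has not been found,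
`ζ_k^{(j)} = 0` for `j ≤ k-3` (`k ≥ 4`) and `Γ_k^{(j)} = 0` for `j ≤ k-2`
(`k ≥ 3`); i.e. the method has a short-term recurrence.  (Coefficients are
`0`-indexed below: `ζ_k^{(j)} = ζ k (j-1)`, `Γ_k^{(j)} = Γ k (j-1)`.) -/
theorem stmt_12 {d : ℕ} (A : Matrix (Fin d) (Fin d) ℝ) (b : E d)
    (hsymm : Aᵀ = A)
    (hpd : ∀ y : E d, y ≠ 0 → 0 < ⟪y, mvE A y⟫_ℝ)
    (typeII : Bool) (β : ℕ → ℝ) (hβ : ∀ j, β j ≠ 0)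
    (x : ℕ → E d) (r : ℕ → E d) (hr : ∀ j, r j = b - mvE A (x j))
    (p q : ℕ → E d) (ζ Γ : ℕ → ℕ → ℝ)
    (h0 : x 1 = x 0 + β 0 • r 0)
    (hpair1 : p 1 = x 1 - x 0 ∧ q 1 = r 1 - r 0)
    (hpair : ∀ j, 2 ≤ j →
      p j = (x j - x (j - 1)) - ∑ i ∈ Finset.range (j - 1), ζ j i • p (1 + i) ∧
      q j = (r j - r (j - 1)) - ∑ i ∈ Finset.range (j - 1), ζ j i • q (1 + i) ∧
      ∀ i < j - 1, ⟪(if typeII then q (1 + i) else p (1 + i)), q j⟫_ℝ = 0)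
    (horth : ∀ j, 1 ≤ j → ∀ i < j,
      ⟪(if typeII then q (1 + i) else p (1 + i)),
        r j - ∑ l ∈ Finset.range j, Γ j l • q (1 + l)⟫_ℝ = 0)
    (hupdate : ∀ j, 1 ≤ j →
      x (j + 1) = (x j - ∑ l ∈ Finset.range j, Γ j l • p (1 + l))
        + β j • (r j - ∑ l ∈ Finset.range j, Γ j l • q (1 + l))) :
    ∀ k : ℕ, (∀ j ≤ k, r j ≠ 0) →
      (4 ≤ k → ∀ i : ℕ, i + 1 ≤ k - 3 → ζ k i = 0) ∧
      (3 ≤ k → ∀ i : ℕ, i + 1 ≤ k - 2 → Γ k i = 0) := by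
  classical
  -- ## basic objects
  set L : E d →ₗ[ℝ] E d := Matrix.toEuclideanLin A with hLdef
  have hmv : ∀ u, mvE A u = L u := fun u => rfl
  have hsym : ∀ u w : E d, ⟪L u, w⟫_ℝ = ⟪u, L w⟫_ℝ := by
    have hherm : A.IsHermitian := by
      unfold Matrix.IsHermitian; rw [Matrix.conjTranspose]; ext i j; simpa using congrFun (congrFun hsymm i) j
    exact Matrix.isHermitian_iff_isSymmetric.mp hherm
  have hpd' : ∀ u : E d, u ≠ 0 → 0 < ⟪u, L u⟫_ℝ := fun u hu => hpd u hu
  have hLinj : ∀ u : E d, L u = 0 → u = 0 := by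
    intro u hu
    by_contra h
    have := hpd' u h
    rw [hu, inner_zero_right] at this
    exact lt_irrefl 0 this
  set v : ℕ → E d := fun j => if typeII then q j else p j with hvdef
  set rb : ℕ → E d := fun j => r j - ∑ l ∈ Finset.range j, Γ j l • q (1 + l) with hrbdef
  have hrbj : ∀ j, rb j = r j - ∑ l ∈ Finset.range j, Γ j l • q (1 + l) := fun j => rfl
  -- difference of residuals
  have hdr : ∀ a c : ℕ, r a - r c = -(L (x a - x c)) := by
    intro a c
    rw [hr a, hr c, hmv, hmv, map_sub]
    abel
  -- q_j = -A p_j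
  have hq : ∀ j, 1 ≤ j → q j = -(L (p j)) := by
    intro j
    induction j using Nat.strong_induction_on with
    | _ j ih =>
      intro hj
      match j, hj with
      | 1, _ => rw [hpair1.1, hpair1.2, hdr]
      | (n+2), _ =>
        obtain ⟨hp2, hq2, -⟩ := hpair (n+2) (by omega)
        have hs1 : ∑ i ∈ Finset.range (n+2-1), ζ (n+2) i • q (1+i)
            = -(L (∑ i ∈ Finset.range (n+2-1), ζ (n+2) i • p (1+i))) := by
          rw [map_sum, ← Finset.sum_neg_distrib]
          refine Finset.sum_congr rfl fun i hi => ?_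
          rw [Finset.mem_range] at hi
          rw [ih (1+i) (by omega) (by omega), smul_neg, LinearMap.map_smul]
        rw [hq2, hp2, hdr, hs1]
        simp only [_root_.map_sub]
        abel
  have hLp : ∀ j, 1 ≤ j → L (p j) = -(q j) := by
    intro j hj; rw [hq j hj, neg_neg]
  -- residual recursion
  have hrnext : ∀ j, 1 ≤ j → r (j+1) = rb j - β j • L (rb j) := by
    intro j hj
    have h1 : r (j+1) = b - L (x (j+1)) := hr (j+1)
    rw [hupdate j hj] at h1
    have hs1 : L (∑ l ∈ Finset.range j, Γ j l • p (1+l))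
        = -(∑ l ∈ Finset.range j, Γ j l • q (1+l)) := by
      rw [map_sum, ← Finset.sum_neg_distrib]
      refine Finset.sum_congr rfl fun l _ => ?_
      rw [LinearMap.map_smul, hLp (1+l) (by omega), smul_neg]
    have hrj : r j = b - L (x j) := hr j
    rw [hrbj, h1, _root_.map_add, _root_.map_sub, LinearMap.map_smul, hs1, hrj]
    abel
  have hr1 : r 1 = rb 0 - β 0 • L (rb 0) := by
    have hrb0 : rb 0 = r 0 := by simp [hrbj]
    have hrj : r 0 = b - L (x 0) := hr 0
    rw [hrb0, hr 1, h0, hmv, _root_.map_add, LinearMap.map_smul, hrj]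
    abel
  have hrnext' : ∀ j, r (j+1) = rb j - β j • L (rb j) := by
    intro j
    rcases Nat.eq_zero_or_pos j with h | h
    · subst h; exact hr1
    · exact hrnext j h
  -- symmetry of the pairing
  have hsymVQ : ∀ i j, 1 ≤ i → 1 ≤ j → ⟪v i, q j⟫_ℝ = ⟪v j, q i⟫_ℝ := by
    intro i j hi hj
    simp only [hvdef]
    cases typeII
    · simp only [Bool.false_eq_true, if_false]
      rw [hq j hj, hq i hi, inner_neg_right, inner_neg_right, ← hsym, real_inner_comm]
    · simp only [if_true]
      exact real_inner_comm _ _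
  -- diagonality of the pairing
  have hdiag : ∀ i j, 1 ≤ i → 1 ≤ j → i ≠ j → ⟪v i, q j⟫_ℝ = 0 := by
    have key : ∀ i j, 1 ≤ i → i < j → ⟪v i, q j⟫_ℝ = 0 := by
      intro i j hi hij
      obtain ⟨-, -, h3⟩ := hpair j (by omega)
      have := h3 (i - 1) (by omega)
      have hidx : 1 + (i - 1) = i := by omega
      rw [hidx] at this
      simpa only [hvdef] using this
    intro i j hi hj hij
    rcases lt_or_gt_of_ne hij with h | h
    · exact key i j hi h
    · rw [hsymVQ i j hi hj]; exact key j i hj h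
  -- orthogonality of rb
  have horthrb : ∀ j, 1 ≤ j → ∀ i, 1 ≤ i → i ≤ j → ⟪v i, rb j⟫_ℝ = 0 := by
    intro j hj i hi hij
    have := horth j hj (i - 1) (by omega)
    have hidx : 1 + (i - 1) = i := by omega
    rw [hidx] at this
    rw [hrbj]
    simpa only [hvdef] using this
  -- ## spans
  set Sp : ℕ → Submodule ℝ (E d) := fun m => Submodule.span ℝ (Set.range fun i : Fin m => p (1 + (i:ℕ))) with hSpdef
  set Sv : ℕ → Submodule ℝ (E d) := fun m => Submodule.span ℝ (Set.range fun i : Fin m => v (1 + (i:ℕ))) with hSvdef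
  set K : ℕ → Submodule ℝ (E d) := fun m => Submodule.span ℝ (Set.range fun i : Fin m => (L ^ (i:ℕ)) (r 0)) with hKdef
  have hmemSp : ∀ j m, 1 ≤ j → j ≤ m → p j ∈ Sp m := by
    intro j m h1 h2
    apply Submodule.subset_span
    refine ⟨⟨j - 1, by omega⟩, ?_⟩
    show p (1 + (j-1)) = p j
    rw [show 1 + (j-1) = j by omega]
  have hmemK : ∀ (i m : ℕ), i < m → (L ^ i) (r 0) ∈ K m := by
    intro i m h
    apply Submodule.subset_span
    exact ⟨⟨i, h⟩, rfl⟩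
  have hKmono : ∀ {m n : ℕ}, m ≤ n → K m ≤ K n := by
    intro m n h
    apply Submodule.span_mono
    rintro _ ⟨i, rfl⟩
    exact ⟨⟨(i:ℕ), by omega⟩, rfl⟩
  have hSpmono : ∀ {m n : ℕ}, m ≤ n → Sp m ≤ Sp n := by
    intro m n h
    apply Submodule.span_mono
    rintro _ ⟨i, rfl⟩
    exact ⟨⟨(i:ℕ), by omega⟩, rfl⟩
  have hSvmono : ∀ {m n : ℕ}, m ≤ n → Sv m ≤ Sv n := by
    intro m n h
    apply Submodule.span_mono
    rintro _ ⟨i, rfl⟩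
    exact ⟨⟨(i:ℕ), by omega⟩, rfl⟩
  have hAK : ∀ (m : ℕ) (u : E d), u ∈ K m → L u ∈ K (m+1) := by
    intro m
    have hle : K m ≤ (K (m+1)).comap L := by
      apply Submodule.span_le.2
      rintro _ ⟨i, rfl⟩
      simp only [Submodule.mem_comap, SetLike.mem_coe]
      have : L ((L ^ (i:ℕ)) (r 0)) = (L ^ ((i:ℕ)+1)) (r 0) := by
        rw [pow_succ', Module.End.mul_apply]
      rw [this]
      exact hmemK _ _ (by omega)
    exact fun u hu => hle hu
  -- Krylov recursion
  have hKrec : ∀ j : ℕ, (r j ∈ K (j+1)) ∧ (rb j ∈ K (j+1)) ∧ (1 ≤ j → p j ∈ K j) := by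
    intro j
    induction j using Nat.strong_induction_on with
    | _ j ih =>
      have hr0K : r 0 ∈ K 1 := by
        have : r 0 = (L ^ 0) (r 0) := by simp
        rw [this]; exact hmemK 0 1 (by omega)
      rcases j with _ | j'
      · refine ⟨hr0K, ?_, by omega⟩
        rw [hrbj]; simpa using hr0K
      · have hpj : p (j'+1) ∈ K (j'+1) := by
          rcases j' with _ | n
          · have : p 1 = β 0 • r 0 := by rw [hpair1.1, h0]; abel
            rw [this]
            exact Submodule.smul_mem _ _ hr0K
          · obtain ⟨hp2, -, -⟩ := hpair (n+2) (by omega)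
            have hup := hupdate (n+1) (by omega)
            have hx : x (n+2) - x (n+2-1)
                = -(∑ l ∈ Finset.range (n+1), Γ (n+1) l • p (1 + l)) + β (n+1) • rb (n+1) := by
              have h2 : (n:ℕ)+2-1 = n+1 := rfl
              rw [h2, hrbj]
              have hxx : x (n+1+1) = x (n+2) := rfl
              rw [← hxx, hup]
              abel
            rw [hp2, hx]
            have hrbK : rb (n+1) ∈ K (n+2) := (ih (n+1) (by omega)).2.1
            refine Submodule.sub_mem _ (Submodule.add_mem _ (Submodule.neg_mem _ ?_)
              (Submodule.smul_mem _ _ hrbK)) ?_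
            · refine Submodule.sum_mem _ fun l hl => Submodule.smul_mem _ _ ?_
              rw [Finset.mem_range] at hl
              exact hKmono (by omega) ((ih (1+l) (by omega)).2.2 (by omega))
            · refine Submodule.sum_mem _ fun i hi => Submodule.smul_mem _ _ ?_
              rw [Finset.mem_range] at hi
              have h2 : (n:ℕ)+2-1 = n+1 := rfl
              rw [h2] at hi
              exact hKmono (by omega) ((ih (1+i) (by omega)).2.2 (by omega))
        have hrK : r (j'+1) ∈ K (j'+2) := by
          rw [hrnext' j']
          have hrbK : rb j' ∈ K (j'+1) := (ih j' (by omega)).2.1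
          exact Submodule.sub_mem _ (hKmono (by omega) hrbK)
            (Submodule.smul_mem _ _ (hAK _ _ hrbK))
        have hrbK : rb (j'+1) ∈ K (j'+2) := by
          rw [hrbj]
          refine Submodule.sub_mem _ hrK (Submodule.sum_mem _ fun l hl => Submodule.smul_mem _ _ ?_)
          rw [Finset.mem_range] at hl
          rw [hq (1+l) (by omega)]
          refine Submodule.neg_mem _ (hAK _ _ ?_)
          rcases Nat.lt_or_ge (1+l) (j'+1) with h | h
          · exact hKmono (by omega) ((ih (1+l) h).2.2 (by omega))
          · have h2 : 1+l = j'+1 := by omega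
            rw [h2]
            exact hpj
        exact ⟨hrK, hrbK, fun _ => hpj⟩
  have hSpK : ∀ m, Sp m ≤ K m := by
    intro m
    apply Submodule.span_le.2
    rintro _ ⟨i, rfl⟩
    exact hKmono (by omega) ((hKrec (1+(i:ℕ))).2.2 (by omega))
  -- inner products vanish on spans of v's
  have hinner0 : ∀ (m : ℕ) (w : E d), (∀ i, 1 ≤ i → i ≤ m → ⟪v i, w⟫_ℝ = 0) →
      ∀ u ∈ Sv m, ⟪u, w⟫_ℝ = 0 := by
    intro m w hw u hu
    let T : Submodule ℝ (E d) :=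
      { carrier := {u | ⟪u, w⟫_ℝ = 0}
        add_mem' := fun {a c} ha hc => by
          simp only [Set.mem_setOf_eq] at *
          rw [inner_add_left, ha, hc, add_zero]
        zero_mem' := by
          simp only [Set.mem_setOf_eq, inner_zero_left]
        smul_mem' := fun c u hu => by
          simp only [Set.mem_setOf_eq] at *
          rw [real_inner_smul_left, hu, mul_zero] }
    have hle : Sv m ≤ T := by
      apply Submodule.span_le.2
      rintro _ ⟨i, rfl⟩
      exact hw (1 + (i:ℕ)) (by omega) (by omega)
    exact hle hu
  -- diagonal extraction from sums
  have hsum_inner : ∀ (m i : ℕ) (c : ℕ → ℝ), i < m →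
      ⟪v (1+i), ∑ l ∈ Finset.range m, c l • q (1 + l)⟫_ℝ = c i * ⟪v (1+i), q (1+i)⟫_ℝ := by
    intro m i c him
    rw [inner_sum]
    rw [Finset.sum_eq_single i (fun l hl hne => by
        rw [real_inner_smul_right,
          hdiag (1+i) (1+l) (by omega) (by omega) (by omega), mul_zero])
      (fun h => absurd (Finset.mem_range.2 him) h)]
    rw [real_inner_smul_right]
  -- ## the conditional part
  intro k hnz
  -- nondegeneracy : p_j ≠ 0
  have hpne : ∀ j, 1 ≤ j → j ≤ k → p j ≠ 0 := by
    intro j hj hjk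
    rcases j with _ | n
    · omega
    rcases Nat.eq_zero_or_pos n with rfl | hn
    · intro hp0
      have h1 : p 1 = β 0 • r 0 := by rw [hpair1.1, h0]; abel
      rw [h1] at hp0
      rcases smul_eq_zero.mp hp0 with h | h
      · exact hβ 0 h
      · exact hnz 0 (by omega) h
    intro hp0
    obtain ⟨hp2, -, -⟩ := hpair (n+1) (by omega)
    have h2 : (n:ℕ)+1-1 = n := rfl
    rw [h2] at hp2
    have hup := hupdate n (by omega)
    have hkey : β n • rb n = p (n+1) + (∑ i ∈ Finset.range n, ζ (n+1) i • p (1+i))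
        + ∑ l ∈ Finset.range n, Γ n l • p (1+l) := by
      rw [hrbj, hp2, hup]
      abel
    rw [hp0, zero_add] at hkey
    have hrbexp : rb n = (β n)⁻¹ • ((∑ i ∈ Finset.range n, ζ (n+1) i • p (1+i))
        + ∑ l ∈ Finset.range n, Γ n l • p (1+l)) := by
      rw [← hkey, inv_smul_smul₀ (hβ n)]
    have haux : ∀ w : E d, (∀ i, 1 ≤ i → i ≤ n → ⟪p i, w⟫_ℝ = 0) → ⟪rb n, w⟫_ℝ = 0 := by
      intro w hw
      rw [hrbexp, real_inner_smul_left, inner_add_left, sum_inner, sum_inner]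
      have e1 : ∀ i ∈ Finset.range n, ⟪ζ (n+1) i • p (1+i), w⟫_ℝ = 0 := fun i hi => by
        rw [Finset.mem_range] at hi
        rw [real_inner_smul_left, hw (1+i) (by omega) (by omega), mul_zero]
      have e2 : ∀ l ∈ Finset.range n, ⟪Γ n l • p (1+l), w⟫_ℝ = 0 := fun l hl => by
        rw [Finset.mem_range] at hl
        rw [real_inner_smul_left, hw (1+l) (by omega) (by omega), mul_zero]
      rw [Finset.sum_eq_zero e1, Finset.sum_eq_zero e2, add_zero, mul_zero]
    have hrbn : rb n = 0 := by
      cases typeII with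
      | false =>
        have hvp : ∀ i, v i = p i := fun i => by simp [hvdef]
        have hz := haux (rb n) (fun i h1 h2 => by
          rw [← hvp i]; exact horthrb n hn i h1 h2)
        exact inner_self_eq_zero.mp hz
      | true =>
        have hvq' : ∀ i, v i = q i := fun i => by simp [hvdef]
        have hz := haux (L (rb n)) (fun i h1 h2 => by
          rw [← hsym, hLp i h1, inner_neg_left, ← hvq' i, horthrb n hn i h1 h2, neg_zero])
        by_contra h
        exact absurd hz (ne_of_gt (hpd' _ h))
    have : r (n+1) = 0 := by rw [hrnext' n, hrbn]; simp
    exact hnz (n+1) hjk this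
  -- nondegeneracy of the pairing diagonal
  have hvqne : ∀ j, 1 ≤ j → j ≤ k → ⟪v j, q j⟫_ℝ ≠ 0 := by
    intro j h1 h2
    have hpj := hpne j h1 h2
    cases typeII with
    | false =>
      have hvp : v j = p j := by simp [hvdef]
      rw [hvp, hq j h1, inner_neg_right]
      exact neg_ne_zero.2 (ne_of_gt (hpd' _ hpj))
    | true =>
      have hvq' : v j = q j := by simp [hvdef]
      have hqj : q j ≠ 0 := by
        rw [hq j h1]
        intro h
        exact hpj (hLinj _ (neg_eq_zero.1 h))
      rw [hvq']
      exact fun h => hqj (inner_self_eq_zero.mp h)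
  -- linear independence of the p's
  have hli : ∀ m, m ≤ k → LinearIndependent ℝ (fun i : Fin m => p (1 + (i:ℕ))) := by
    intro m hm
    rw [linearIndependent_iff']
    intro s g hsum i₀ hi₀
    have hLsum := congrArg (fun u => L u) hsum
    simp only [map_sum, LinearMap.map_smul, map_zero] at hLsum
    have hqsum : ∑ i ∈ s, g i • q (1 + (i:ℕ)) = 0 := by
      calc ∑ i ∈ s, g i • q (1+(i:ℕ))
          = ∑ i ∈ s, (-(g i • L (p (1+(i:ℕ))))) :=
            Finset.sum_congr rfl fun i _ => by rw [hq (1+(i:ℕ)) (by omega), smul_neg]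
        _ = -∑ i ∈ s, g i • L (p (1+(i:ℕ))) := Finset.sum_neg_distrib _
        _ = 0 := by rw [hLsum, neg_zero]
    have h0 := congrArg (fun u => ⟪v (1+(i₀:ℕ)), u⟫_ℝ) hqsum
    simp only [inner_zero_right] at h0
    rw [inner_sum] at h0
    rw [Finset.sum_eq_single i₀ (fun i hi hne => by
        rw [real_inner_smul_right, hdiag (1+(i₀:ℕ)) (1+(i:ℕ)) (by omega) (by omega)
          (fun hcon => hne (Fin.ext (by omega))), mul_zero])
      (fun h => absurd hi₀ h)] at h0
    rw [real_inner_smul_right] at h0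
    rcases mul_eq_zero.mp h0 with h | h
    · exact h
    · exact absurd h (hvqne (1+(i₀:ℕ)) (by omega) (by omega))
  -- the p's span the Krylov spaces
  have hSpeq : ∀ m, m ≤ k → Sp m = K m := by
    intro m hm
    refine Submodule.eq_of_le_of_finrank_le (hSpK m) ?_
    have h1 : Module.finrank ℝ (K m) ≤ m := by
      have := finrank_range_le_card (R := ℝ) (fun i : Fin m => (L ^ (i:ℕ)) (r 0))
      simpa [Set.finrank] using this
    have h2 : Module.finrank ℝ (Sp m) = m := by
      have := finrank_span_eq_card (hli m hm)
      simpa [Set.finrank] using this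
    rw [h2]
    exact h1
  have hB : ∀ j, 1 ≤ j → j+1 ≤ k → L (p j) ∈ Sp (j+1) := by
    intro j h1 h2
    rw [hSpeq (j+1) h2]
    exact hAK j _ ((hKrec j).2.2 h1)
  have hBv : ∀ j, 1 ≤ j → j+1 ≤ k → L (v j) ∈ Sv (j+1) := by
    intro j h1 h2
    cases typeII with
    | false =>
      have hvp : ∀ i, v i = p i := fun i => by simp [hvdef]
      have hSv : Sv (j+1) = Sp (j+1) := by
        simp only [hSvdef, hSpdef, hvp]
      rw [hvp j, hSv]
      exact hB j h1 h2
    | true =>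
      have hvq' : ∀ i, v i = q i := fun i => by simp [hvdef]
      have hmapsub : ∀ m, ∀ u ∈ Sp m, L u ∈ Sv m := by
        intro m
        have hle : Sp m ≤ (Sv m).comap L := by
          apply Submodule.span_le.2
          rintro _ ⟨i, rfl⟩
          simp only [Submodule.mem_comap, SetLike.mem_coe]
          rw [hLp (1+(i:ℕ)) (by omega)]
          refine Submodule.neg_mem _ ?_
          exact Submodule.subset_span ⟨i, hvq' _⟩
        exact fun u hu => hle hu
      rw [hvq' j, hq j h1, map_neg]
      exact Submodule.neg_mem _ (hmapsub (j+1) _ (hB j h1 h2))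
  -- the Γ coefficients vanish
  have hGamma : ∀ k', k' ≤ k → 3 ≤ k' → ∀ i, i + 1 ≤ k' - 2 → Γ k' i = 0 := by
    intro k' hk'k h3 i hi
    obtain ⟨m, rfl⟩ : ∃ m, k' = m + 1 := ⟨k' - 1, by omega⟩
    have h' : ⟪v (1+i), r (m+1) - ∑ l ∈ Finset.range (m+1), Γ (m+1) l • q (1+l)⟫_ℝ = 0 := by
      simpa only [hvdef] using horth (m+1) (by omega) i (by omega)
    rw [inner_sub_right, hsum_inner (m+1) i _ (by omega)] at h'
    have hr0 : ⟪v (1+i), r (m+1)⟫_ℝ = 0 := by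
      rw [hrnext' m, inner_sub_right, real_inner_smul_right]
      have e1 : ⟪v (1+i), rb m⟫_ℝ = 0 := horthrb m (by omega) (1+i) (by omega) (by omega)
      have e2 : ⟪v (1+i), L (rb m)⟫_ℝ = 0 := by
        rw [← hsym]
        exact hinner0 m (rb m) (fun i' hi1 hi2 => horthrb m (by omega) i' hi1 hi2) _
          (hSvmono (by omega : (1+i)+1 ≤ m) (hBv (1+i) (by omega) (by omega)))
      rw [e1, e2, mul_zero, sub_zero]
    rw [hr0, zero_sub, neg_eq_zero] at h'
    rcases mul_eq_zero.mp h' with h'' | h''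
    · exact h''
    · exact absurd h'' (hvqne (1+i) (by omega) (by omega))
  refine ⟨?_, fun h3 i hi => hGamma k le_rfl h3 i hi⟩
  -- the ζ coefficients vanish
  intro h4 i hi
  obtain ⟨m, rfl⟩ : ∃ m, k = m + 1 := ⟨k - 1, by omega⟩
  obtain ⟨-, hq2, h3⟩ := hpair (m+1) (by omega)
  have h2 : (m:ℕ)+1-1 = m := rfl
  rw [h2] at hq2 h3
  have hz : ⟪v (1+i), q (m+1)⟫_ℝ = 0 := by
    simpa only [hvdef] using h3 i (by omega)
  rw [hq2, inner_sub_right, hsum_inner m i _ (by omega)] at hz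
  have hdr' : r (m+1) - r m = -(∑ l ∈ Finset.range m, Γ m l • q (1+l)) - β m • L (rb m) := by
    rw [hrnext' m, hrbj]
    abel
  have hA : ⟪v (1+i), r (m+1) - r m⟫_ℝ = 0 := by
    rw [hdr', inner_sub_right, inner_neg_right, hsum_inner m i _ (by omega),
      real_inner_smul_right]
    rw [hGamma m (by omega) (by omega) i (by omega)]
    have e2 : ⟪v (1+i), L (rb m)⟫_ℝ = 0 := by
      rw [← hsym]
      exact hinner0 m (rb m) (fun i' hi1 hi2 => horthrb m (by omega) i' hi1 hi2) _
        (hSvmono (by omega : (1+i)+1 ≤ m) (hBv (1+i) (by omega) (by omega)))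
    rw [e2]
    ring
  rw [hA, zero_sub, neg_eq_zero] at hz
  rcases mul_eq_zero.mp hz with h'' | h''
  · exact h''
  · exact absurd h'' (hvqne (1+i) (by omega) (by omega))

end
end
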